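/- arXiv:1603.07382 — 5 statements merged into one kernel-verified Lean document; each statement's English description precedes it below -/
import Mathlib

section
/- Fix α > 0 and k ∈ ℕ, k ≥ 1, and define h_k(x) = Σ_{j=0}^{k} (-1)^j C(k,j) (x-j)_+^α for x ∈ ℝ, where y_+ = max(y,0). Then there is a constant K such that |h_k(x)| ≤ K (x-k)^{α-k} for all x > k+1. -/
open Finset Set

lemma pascal_sum (k : ℕ) (g : ℝ → ℝ) (x : ℝ) :
    ∑ j ∈ range (k+2), (-1:ℝ)^j * ((k+1).choose j : ℝ) * g (x - j)
      = ∑ j ∈ range (k+1), (-1:ℝ)^j * (k.choose j : ℝ) * g (x - j)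
        - ∑ j ∈ range (k+1), (-1:ℝ)^j * (k.choose j : ℝ) * g (x - 1 - j) := by
  have e1 : ∑ j ∈ range (k+2), (-1:ℝ)^j * ((k+1).choose j : ℝ) * g (x - j)
      = (∑ j ∈ range (k+1), (-1:ℝ)^(j+1) * ((k+1).choose (j+1) : ℝ) * g (x - ((j:ℝ)+1))) + g x := by
    rw [Finset.sum_range_succ' (fun j => (-1:ℝ)^j * ((k+1).choose j : ℝ) * g (x - j)) (k+1)]
    simp [Nat.cast_add]
  have e2 : ∑ j ∈ range (k+2), (-1:ℝ)^j * (k.choose j : ℝ) * g (x - j)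
      = (∑ j ∈ range (k+1), (-1:ℝ)^(j+1) * (k.choose (j+1) : ℝ) * g (x - ((j:ℝ)+1))) + g x := by
    rw [Finset.sum_range_succ' (fun j => (-1:ℝ)^j * (k.choose j : ℝ) * g (x - j)) (k+1)]
    simp [Nat.cast_add]
  have e3 : ∑ j ∈ range (k+2), (-1:ℝ)^j * (k.choose j : ℝ) * g (x - j)
      = ∑ j ∈ range (k+1), (-1:ℝ)^j * (k.choose j : ℝ) * g (x - j) := by
    rw [Finset.sum_range_succ, Nat.choose_succ_self]
    simp
  have e4 : ∑ j ∈ range (k+1), (-1:ℝ)^j * (k.choose j : ℝ) * g (x - 1 - j)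
      = ∑ j ∈ range (k+1), (-1:ℝ)^j * (k.choose j : ℝ) * g (x - ((j:ℝ)+1)) := by
    apply Finset.sum_congr rfl
    intro j _
    congr 1
    ring
  have e5 : ∑ j ∈ range (k+1), (-1:ℝ)^(j+1) * ((k+1).choose (j+1) : ℝ) * g (x - ((j:ℝ)+1))
      = (∑ j ∈ range (k+1), (-1:ℝ)^(j+1) * (k.choose (j+1) : ℝ) * g (x - ((j:ℝ)+1)))
        + (∑ j ∈ range (k+1), (-1:ℝ)^(j+1) * (k.choose j : ℝ) * g (x - ((j:ℝ)+1))) := by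
    rw [← Finset.sum_add_distrib]
    apply Finset.sum_congr rfl
    intro j _
    rw [Nat.choose_succ_succ']
    push_cast
    ring
  rw [e1, e4, e5]
  have := e3 ▸ e2
  have e6 : ∀ j ∈ range (k+1), (-1:ℝ)^(j+1) * (k.choose j : ℝ) * g (x - ((j:ℝ)+1))
      = -((-1:ℝ)^j * (k.choose j : ℝ) * g (x - ((j:ℝ)+1))) := by
    intro j _; ring
  rw [Finset.sum_congr rfl e6, Finset.sum_neg_distrib]
  linarith

open Finset Set Real

lemma rpow_step (a s γ : ℝ) (ha : 1 ≤ a) (h1 : a ≤ s) (h2 : s ≤ a + 1) :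
    s ^ γ ≤ 2 ^ |γ| * a ^ γ := by
  rcases le_or_gt 0 γ with hγ | hγ
  · calc s ^ γ ≤ (2*a) ^ γ := Real.rpow_le_rpow (by linarith) (by linarith) hγ
    _ = 2 ^ γ * a ^ γ := Real.mul_rpow (by norm_num) (by linarith)
    _ ≤ 2 ^ |γ| * a ^ γ := by
        have : (2:ℝ) ^ γ ≤ 2 ^ |γ| :=
          Real.rpow_le_rpow_of_exponent_le one_le_two (le_abs_self γ)
        have ha' : (0:ℝ) ≤ a ^ γ := Real.rpow_nonneg (by linarith) γ
        nlinarith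
  · calc s ^ γ ≤ a ^ γ := Real.rpow_le_rpow_of_nonpos (by linarith) h1 hγ.le
    _ ≤ 2 ^ |γ| * a ^ γ :=
        le_mul_of_one_le_left (Real.rpow_nonneg (by linarith) γ)
          (Real.one_le_rpow one_le_two (abs_nonneg γ))

lemma aux_bound (k : ℕ) : ∀ β : ℝ, ∃ K > (0:ℝ), ∀ x : ℝ, (k:ℝ) + 1 < x →
    |∑ j ∈ range (k+1), (-1:ℝ)^j * (k.choose j : ℝ) * (x - j) ^ β|
      ≤ K * (x - k) ^ (β - k) := by
  induction k with
  | zero =>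
    intro β
    refine ⟨1, one_pos, fun x hx => ?_⟩
    simp only [Nat.cast_zero, CharP.cast_eq_zero] at hx ⊢
    simp only [zero_add, range_one, Finset.sum_singleton, pow_zero, Nat.choose_self,
      Nat.cast_one, one_mul, Nat.cast_zero, sub_zero]
    rw [abs_of_nonneg (Real.rpow_nonneg (by linarith) β)]
  | succ k ih =>
    intro β
    obtain ⟨K, hK, hbound⟩ := ih (β - 1)
    refine ⟨(|β|+1) * K * 2 ^ |β - 1 - (k:ℝ)|, by positivity, fun x hx => ?_⟩
    have hx' : (k:ℝ) + 2 < x := by push_cast at hx; linarith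
    set H : ℝ → ℝ := fun t => ∑ j ∈ range (k+1), (-1:ℝ)^j * (k.choose j : ℝ) * (t - j) ^ β with hH
    have hder : ∀ t : ℝ, (k:ℝ) + 1 < t →
        HasDerivAt H (β * ∑ j ∈ range (k+1), (-1:ℝ)^j * (k.choose j : ℝ) * (t - j) ^ (β-1)) t := by
      intro t ht
      have h0 : HasDerivAt H
          (∑ j ∈ range (k+1), (-1:ℝ)^j * (k.choose j : ℝ) * (1 * β * (t - j) ^ (β-1))) t := by
        apply HasDerivAt.fun_sum
        intro j hj
        have hj' : (j:ℝ) ≤ k := by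
          exact_mod_cast Nat.lt_succ_iff.mp (Finset.mem_range.mp hj)
        have hne : t - (j:ℝ) ≠ 0 := by intro h; rw [sub_eq_zero] at h; linarith
        exact (((hasDerivAt_id t).sub_const (j:ℝ)).rpow_const (Or.inl hne)).const_mul _
      convert h0 using 1
      rw [Finset.mul_sum]
      apply Finset.sum_congr rfl
      intro j _
      ring
    -- MVT on [x-1, x]
    obtain ⟨c, hc, hceq⟩ := exists_hasDerivAt_eq_slope H
      (fun t => β * ∑ j ∈ range (k+1), (-1:ℝ)^j * (k.choose j : ℝ) * (t - j) ^ (β-1))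
      (by linarith : x - 1 < x)
      (fun t ht => (hder t (by simp only [Set.mem_Icc] at ht; linarith)).continuousAt.continuousWithinAt)
      (fun t ht => hder t (by simp only [Set.mem_Ioo] at ht; linarith))
    simp only [Set.mem_Ioo] at hc
    have hslope : H x - H (x - 1)
        = β * ∑ j ∈ range (k+1), (-1:ℝ)^j * (k.choose j : ℝ) * (c - j) ^ (β-1) := by
      rw [hceq]
      field_simp
      ring
    -- Pascal
    have hpas : ∑ j ∈ range (k+1+1), (-1:ℝ)^j * ((k+1).choose j : ℝ) * (x - j) ^ β
        = H x - H (x - 1) := by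
      have := pascal_sum k (fun t => t ^ β) x
      simpa [hH] using this
    rw [hpas, hslope, abs_mul]
    have hc1 : (k:ℝ) + 1 < c := by linarith
    have hIH := hbound c hc1
    have hstep : (c - k) ^ (β - 1 - k) ≤ 2 ^ |β - 1 - (k:ℝ)| * (x - 1 - k) ^ (β - 1 - k) :=
      rpow_step (x - 1 - k) (c - k) _ (by linarith) (by linarith) (by linarith)
    have hfin : |∑ j ∈ range (k+1), (-1:ℝ)^j * (k.choose j : ℝ) * (c - j) ^ (β-1)|
        ≤ K * (2 ^ |β - 1 - (k:ℝ)| * (x - 1 - k) ^ (β - 1 - k)) := by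
      refine hIH.trans ?_
      exact mul_le_mul_of_nonneg_left hstep hK.le
    have habs : |β| ≤ |β| + 1 := by linarith
    have hrp : (0:ℝ) ≤ (x - 1 - k) ^ (β - 1 - k) := Real.rpow_nonneg (by linarith) _
    have hcast : x - ((k:ℕ)+1 : ℕ) = x - 1 - k := by push_cast; ring
    have hcast2 : β - ((k:ℕ)+1 : ℕ) = β - 1 - k := by push_cast; ring
    calc |β| * |∑ j ∈ range (k+1), (-1:ℝ)^j * (k.choose j : ℝ) * (c - j) ^ (β-1)|
        ≤ (|β|+1) * (K * (2 ^ |β - 1 - (k:ℝ)| * (x - 1 - k) ^ (β - 1 - k))) := by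
          apply mul_le_mul habs hfin (abs_nonneg _) (by positivity)
      _ = (|β|+1) * K * 2 ^ |β - 1 - (k:ℝ)| * (x - 1 - k) ^ (β - 1 - k) := by ring
      _ = (|β|+1) * K * 2 ^ |β - 1 - (k:ℝ)| * (x - ((k:ℕ)+1:ℕ)) ^ (β - ((k:ℕ)+1:ℕ)) := by
          rw [hcast, hcast2]

theorem stmt1 (α : ℝ) (hα : 0 < α) (k : ℕ) (hk : 1 ≤ k) :
    ∃ K > (0:ℝ), ∀ x : ℝ, (k : ℝ) + 1 < x →
      |∑ j ∈ Finset.range (k+1), (-1:ℝ)^j * (k.choose j : ℝ) * (max (x - j) 0) ^ α|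
        ≤ K * (x - k) ^ (α - (k:ℝ)) := by
  obtain ⟨K, hK, hbound⟩ := aux_bound k α
  refine ⟨K, hK, fun x hx => ?_⟩
  have heq : ∑ j ∈ Finset.range (k+1), (-1:ℝ)^j * (k.choose j : ℝ) * (max (x - j) 0) ^ α
      = ∑ j ∈ Finset.range (k+1), (-1:ℝ)^j * (k.choose j : ℝ) * (x - j) ^ α := by
    apply Finset.sum_congr rfl
    intro j hj
    have hj' : (j:ℝ) ≤ k := by
      exact_mod_cast Nat.lt_succ_iff.mp (Finset.mem_range.mp hj)
    rw [max_eq_left (by linarith)]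
  rw [heq]
  exact hbound x hx
end

section
/- Let V = (V_1,…,V_d) be an absolutely continuous random vector in ℝ^d whose density v is continuously differentiable on an open convex set A ⊆ ℝ^d and vanishes outside A. Then as n → ∞, the vector of fractional parts ({nV_1},…,{nV_d}) converges stably in law (with respect to the σ-algebra generated by V) to (U_1,…,U_d), where U_1,…,U_d are i.i.d. uniform on [0,1] and independent of V. -/
open MeasureTheory ProbabilityTheory Filter Set Topology
open scoped NNReal ENNReal

lemma mp_fract_aux (c : ℝ) (hc0 : 0 ≤ c) (hc1 : c < 1) :
    MeasurePreserving (fun t => Int.fract (c + t))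
      (volume.restrict (Ico (0:ℝ) 1)) (volume.restrict (Ico (0:ℝ) 1)) := by
  have hmeas : Measurable fun t : ℝ => Int.fract (c + t) :=
    measurable_fract.comp (measurable_const_add c)
  refine ⟨hmeas, ?_⟩
  have hsplit : Ico (0:ℝ) 1 = Ico 0 (1-c) ∪ Ico (1-c) 1 :=
    (Ico_union_Ico_eq_Ico (by linarith) (by linarith)).symm
  have hdisj : Disjoint (Ico (0:ℝ) (1-c)) (Ico (1-c) 1) := Set.Ico_disjoint_Ico_same

  have h1 : Measure.map (fun t => Int.fract (c + t)) (volume.restrict (Ico 0 (1-c)))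
      = volume.restrict (Ico c 1) := by
    have he : (fun t => Int.fract (c + t)) =ᵐ[volume.restrict (Ico 0 (1-c))] (fun t => c + t) := by
      refine (ae_restrict_iff' measurableSet_Ico).2 (Filter.Eventually.of_forall ?_)
      intro t ht
      exact Int.fract_eq_self.2 ⟨by linarith [ht.1], by linarith [ht.2]⟩
    rw [Measure.map_congr he]
    have hpre : Ico (0:ℝ) (1-c) = (fun t => c + t) ⁻¹' (Ico c 1) := by
      ext t; simp only [Set.mem_Ico, Set.mem_preimage]
      constructor <;> rintro ⟨ha, hb⟩ <;> exact ⟨by linarith, by linarith⟩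
    rw [hpre, ← Measure.restrict_map (measurable_const_add c) measurableSet_Ico,
      map_add_left_eq_self]
  have h2 : Measure.map (fun t => Int.fract (c + t)) (volume.restrict (Ico (1-c) 1))
      = volume.restrict (Ico 0 c) := by
    have he : (fun t => Int.fract (c + t)) =ᵐ[volume.restrict (Ico (1-c) 1)]
        (fun t => (c-1) + t) := by
      refine (ae_restrict_iff' measurableSet_Ico).2 (Filter.Eventually.of_forall ?_)
      intro t ht
      show Int.fract (c + t) = (c-1) + t
      have : Int.fract (c + t) = Int.fract (c + t - 1) := by
        rw [show c + t - 1 = c + t - (1:ℤ) by push_cast; ring, Int.fract_sub_intCast]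
      rw [this, Int.fract_eq_self.2 ⟨by linarith [ht.1], by linarith [ht.2]⟩]; ring
    rw [Measure.map_congr he]
    have hpre : Ico (1-c) 1 = (fun t => (c-1) + t) ⁻¹' (Ico 0 c) := by
      ext t; simp only [Set.mem_Ico, Set.mem_preimage]
      constructor <;> rintro ⟨ha, hb⟩ <;> exact ⟨by linarith, by linarith⟩
    rw [hpre, ← Measure.restrict_map (measurable_const_add (c-1)) measurableSet_Ico,
      map_add_left_eq_self]
  calc Measure.map (fun t => Int.fract (c + t)) (volume.restrict (Ico 0 1))
      = Measure.map (fun t => Int.fract (c + t))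
        (volume.restrict (Ico 0 (1-c)) + volume.restrict (Ico (1-c) 1)) := by
        rw [← Measure.restrict_union hdisj measurableSet_Ico, ← hsplit]
    _ = volume.restrict (Ico c 1) + volume.restrict (Ico 0 c) := by
        rw [Measure.map_add _ _ hmeas, h1, h2]
    _ = volume.restrict (Ico 0 1) := by
        rw [add_comm, ← Measure.restrict_union Set.Ico_disjoint_Ico_same measurableSet_Ico,
          Ico_union_Ico_eq_Ico hc0 hc1.le]

lemma mp_fract (c : ℝ) :
    MeasurePreserving (fun t => Int.fract (c + t))
      (volume.restrict (Ico (0:ℝ) 1)) (volume.restrict (Ico (0:ℝ) 1)) := by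
  have : (fun t => Int.fract (c + t)) = fun t => Int.fract (Int.fract c + t) := by
    funext t
    rw [show c + t = (⌊c⌋ : ℤ) + (Int.fract c + t) by push_cast [Int.fract]; ring,
      Int.fract_intCast_add]
  rw [this]
  exact mp_fract_aux _ (Int.fract_nonneg c) (Int.fract_lt_one c)

lemma pi_restrict_eq {d : ℕ} (s : Fin d → Set ℝ) (hs : ∀ i, MeasurableSet (s i)) :
    (volume : Measure (Fin d → ℝ)).restrict (Set.univ.pi s)
      = Measure.pi (fun i => (volume : Measure ℝ).restrict (s i)) := by
  refine (Measure.pi_eq (μ := fun i => (volume : Measure ℝ).restrict (s i)) fun t ht => ?_).symm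
  rw [Measure.restrict_apply (MeasurableSet.univ_pi ht), ← Set.pi_inter_distrib, volume_pi,
    Measure.pi_pi]
  simp_rw [Measure.restrict_apply (ht _)]

lemma mp_fract_pi {d : ℕ} (c : Fin d → ℝ) :
    MeasurePreserving (fun (t : Fin d → ℝ) i => Int.fract (c i + t i))
      ((volume : Measure (Fin d → ℝ)).restrict (Set.univ.pi fun _ => Ico (0:ℝ) 1))
      ((volume : Measure (Fin d → ℝ)).restrict (Set.univ.pi fun _ => Ico (0:ℝ) 1)) := by
  rw [pi_restrict_eq _ (fun _ => measurableSet_Ico)]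
  exact measurePreserving_pi (fun _ => volume.restrict (Ico (0:ℝ) 1))
    (fun _ => volume.restrict (Ico (0:ℝ) 1)) (fun i => mp_fract (c i))

lemma integral_fract_shift {d : ℕ} (c : Fin d → ℝ) (g : (Fin d → ℝ) → ℝ)
    (hg : AEStronglyMeasurable g
      ((volume : Measure (Fin d → ℝ)).restrict (Set.univ.pi fun _ => Ico (0:ℝ) 1))) :
    ∫ t in Set.univ.pi fun _ => Ico (0:ℝ) 1, g (fun i => Int.fract (c i + t i))
      = ∫ u in Set.univ.pi fun _ => Ico (0:ℝ) 1, g u := by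
  have h := mp_fract_pi c
  calc ∫ t in Set.univ.pi fun _ => Ico (0:ℝ) 1, g (fun i => Int.fract (c i + t i))
      = ∫ u, g u ∂(Measure.map (fun (t : Fin d → ℝ) i => Int.fract (c i + t i))
          ((volume : Measure (Fin d → ℝ)).restrict (Set.univ.pi fun _ => Ico (0:ℝ) 1))) := by
        rw [integral_map h.aemeasurable (by rwa [h.map_eq])]
    _ = ∫ u in Set.univ.pi fun _ => Ico (0:ℝ) 1, g u := by rw [h.map_eq]

lemma measurableSet_Ipi {d : ℕ} : MeasurableSet (Set.univ.pi fun _ : Fin d => Ico (0:ℝ) 1) :=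
  MeasurableSet.univ_pi fun _ => measurableSet_Ico

lemma isProb_Ipi {d : ℕ} : IsProbabilityMeasure
    ((volume : Measure (Fin d → ℝ)).restrict (Set.univ.pi fun _ : Fin d => Ico (0:ℝ) 1)) := by
  constructor
  rw [Measure.restrict_apply_univ, volume_pi_pi]
  simp

lemma core {d : ℕ} (f : (Fin d → ℝ) → (Fin d → ℝ) → ℝ)
    (hf : Continuous fun z : (Fin d → ℝ) × (Fin d → ℝ) => f z.1 z.2)
    (C : ℝ) (hC : ∀ x y, |f x y| ≤ C)
    (w : (Fin d → ℝ) → ℝ) (hw : Continuous w) (hsupp : HasCompactSupport w) :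
    Tendsto (fun n : ℕ => ∫ x, f x (fun i => Int.fract ((n:ℝ) * x i)) * w x) atTop
      (𝓝 (∫ x, (∫ u in Set.univ.pi fun _ : Fin d => Ico (0:ℝ) 1, f x u) * w x)) := by
  haveI := isProb_Ipi (d := d)
  set I : Set (Fin d → ℝ) := Set.univ.pi fun _ : Fin d => Ico (0:ℝ) 1 with hI
  set G : (Fin d → ℝ) × (Fin d → ℝ) → ℝ := fun p => f p.1 p.2 * w p.1 with hGdef
  have hG : Continuous G := hf.mul (hw.comp continuous_fst)
  -- support radius
  obtain ⟨R₀, hR₀⟩ := hsupp.isBounded.subset_closedBall (0 : Fin d → ℝ)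
  set R : ℝ := max R₀ 0 with hRdef
  have hR : tsupport w ⊆ Metric.closedBall 0 R :=
    hR₀.trans (Metric.closedBall_subset_closedBall (le_max_left _ _))
  have hR0 : 0 ≤ R := le_max_right _ _
  have hwzero : ∀ y : Fin d → ℝ, R < ‖y‖ → w y = 0 := by
    intro y hy
    apply image_eq_zero_of_notMem_tsupport
    intro hmem
    have := hR hmem
    rw [Metric.mem_closedBall, dist_zero_right] at this
    linarith
  -- measurability of the shifted-fract maps
  have hfr : ∀ (a : ℝ) (b : Fin d → ℝ),
      Measurable fun x : Fin d → ℝ => (fun i => Int.fract (a * x i + b i) : Fin d → ℝ) := by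
    intro a b
    exact measurable_pi_lambda _ fun i =>
      measurable_fract.comp (by fun_prop : Measurable fun x : Fin d → ℝ => a * x i + b i)
  have hwint : Integrable w := hw.integrable_of_hasCompactSupport hsupp
  have habs : ∀ p : (Fin d → ℝ) × (Fin d → ℝ), |G p| ≤ |C| * |w p.1| := by
    intro p
    rw [hGdef, abs_mul]
    exact mul_le_mul_of_nonneg_right ((hC _ _).trans (le_abs_self C)) (abs_nonneg _)
  -- integrability in x of the basic integrands
  have hint : ∀ (a : ℝ) (b : Fin d → ℝ),
      Integrable (fun x => G (x, fun i => Int.fract (a * x i + b i))) := by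
    intro a b
    have hm : Measurable fun x : Fin d → ℝ => f x (fun i => Int.fract (a * x i + b i)) :=
      hf.measurable.comp (measurable_id.prodMk (hfr a b))
    exact hwint.bdd_mul hm.aestronglyMeasurable
      (Eventually.of_forall fun x => by simpa [Real.norm_eq_abs] using (hC _ _).trans (le_abs_self C))
  have hTn : ∀ n : ℕ, 1 ≤ n → ∀ t : Fin d → ℝ,
      (∫ x, G (x + ((n:ℝ)⁻¹ • t), fun i => Int.fract ((n:ℝ) * x i + t i)))
        = ∫ x, G (x, fun i => Int.fract ((n:ℝ) * x i)) := by
    intro n hn t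
    have hne : (n:ℝ) ≠ 0 := Nat.cast_ne_zero.2 (by omega)
    have hkey : ∀ x : Fin d → ℝ, (fun i => Int.fract ((n:ℝ) * x i + t i))
        = fun i => Int.fract ((n:ℝ) * (x + (n:ℝ)⁻¹ • t) i) := by
      intro x; funext i
      simp only [Pi.add_apply, Pi.smul_apply, smul_eq_mul]
      rw [mul_add, ← mul_assoc, mul_inv_cancel₀ hne, one_mul]
    calc ∫ x, G (x + ((n:ℝ)⁻¹ • t), fun i => Int.fract ((n:ℝ) * x i + t i))
        = ∫ x, (fun y => G (y, fun i => Int.fract ((n:ℝ) * y i))) (x + ((n:ℝ)⁻¹ • t)) := by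
          congr 1; funext x; rw [hkey x]
      _ = ∫ x, G (x, fun i => Int.fract ((n:ℝ) * x i)) := by
          simpa using integral_add_right_eq_self
            (fun y => G (y, fun i => Int.fract ((n:ℝ) * y i))) ((n:ℝ)⁻¹ • t)
  have hψ : ∀ n : ℕ, Measurable fun p : (Fin d → ℝ) × (Fin d → ℝ) =>
      ((fun i => Int.fract ((n:ℝ) * p.2 i + p.1 i)) : Fin d → ℝ) := by
    intro n
    refine measurable_pi_lambda _ fun i => measurable_fract.comp ?_
    exact (((measurable_pi_apply i).comp measurable_snd).const_mul _).add
      ((measurable_pi_apply i).comp measurable_fst)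
  have hprod : ∀ n : ℕ, Integrable
      (fun p : (Fin d → ℝ) × (Fin d → ℝ) =>
        G (p.2, fun i => Int.fract ((n:ℝ) * p.2 i + p.1 i)))
      ((volume.restrict I).prod volume) := by
    intro n
    have hmeas : AEStronglyMeasurable
        (fun p : (Fin d → ℝ) × (Fin d → ℝ) =>
          G (p.2, fun i => Int.fract ((n:ℝ) * p.2 i + p.1 i)))
        ((volume.restrict I).prod volume) := by
      apply Measurable.aestronglyMeasurable
      exact hG.measurable.comp (measurable_snd.prodMk (hψ n))
    rw [integrable_prod_iff hmeas]
    refine ⟨Eventually.of_forall fun t => hint (n:ℝ) t, ?_⟩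
    refine Integrable.mono' (integrable_const (∫ x, |C| * |w x|))
      hmeas.norm.integral_prod_right' (Eventually.of_forall fun t => ?_)
    rw [Real.norm_eq_abs, abs_of_nonneg (integral_nonneg fun x => norm_nonneg _)]
    refine integral_mono (hint (n:ℝ) t).norm (hwint.abs.const_mul |C|) fun x => ?_
    rw [Real.norm_eq_abs]
    exact habs _
  have hswap : ∀ n : ℕ,
      (∫ t in I, ∫ x, G (x, fun i => Int.fract ((n:ℝ) * x i + t i)))
        = ∫ x, (∫ u in I, f x u) * w x := by
    intro n
    rw [integral_integral_swap (hprod n)]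
    have hx : ∀ x : Fin d → ℝ,
        (∫ t in I, G (x, fun i => Int.fract ((n:ℝ) * x i + t i)))
          = (∫ u in I, f x u) * w x := by
      intro x
      have hmx : AEStronglyMeasurable (fun u : Fin d → ℝ => G (x, u))
          ((volume : Measure (Fin d → ℝ)).restrict I) :=
        (hG.comp (Continuous.prodMk_right x)).aestronglyMeasurable
      rw [integral_fract_shift (fun i => (n:ℝ) * x i) (fun u => G (x, u)) hmx]
      simp only [hGdef]
      exact integral_mul_const _ _
    exact integral_congr_ae (Eventually.of_forall hx)
  -- the ε-N argument
  rw [Metric.tendsto_atTop]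
  intro ε hε
  set κ : ℝ := (volume (Metric.closedBall (0 : Fin d → ℝ) (R+1))).toReal with hκdef
  have hκ0 : 0 ≤ κ := ENNReal.toReal_nonneg
  set ε' : ℝ := ε / (2 * (κ + 1)) with hε'def
  have hε'0 : 0 < ε' := by positivity
  set K : Set ((Fin d → ℝ) × (Fin d → ℝ)) :=
    Metric.closedBall 0 (R+2) ×ˢ Icc (0 : Fin d → ℝ) 1 with hKdef
  have hK : IsCompact K := (isCompact_closedBall _ _).prod isCompact_Icc
  have hucont : UniformContinuousOn G K := hK.uniformContinuousOn_of_continuous hG.continuousOn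
  obtain ⟨δ, hδ0, hδ⟩ := Metric.uniformContinuousOn_iff.1 hucont ε' hε'0
  obtain ⟨N₀, hN₀⟩ := exists_nat_gt (1/δ)
  refine ⟨max N₀ 1, fun n hn => ?_⟩
  have hn1 : 1 ≤ n := le_trans (le_max_right _ _) hn
  have hnR : (0:ℝ) < n := by exact_mod_cast Nat.pos_of_ne_zero (by omega)
  have hinvδ : (n:ℝ)⁻¹ < δ := by
    have h1 : 1/δ < (n:ℝ) := lt_of_lt_of_le hN₀
      (by exact_mod_cast Nat.cast_le.2 (le_trans (le_max_left _ _) hn))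
    rw [div_lt_iff₀ hδ0] at h1
    rw [inv_lt_iff_one_lt_mul₀ hnR]
    linarith [h1]
  have hinv1 : (n:ℝ)⁻¹ ≤ 1 := by
    rw [inv_le_one_iff₀]; right; exact_mod_cast hn1
  -- pointwise bound
  have hpt : ∀ t ∈ I, ∀ x : Fin d → ℝ,
      ‖G (x + ((n:ℝ)⁻¹ • t), fun i => Int.fract ((n:ℝ) * x i + t i))
        - G (x, fun i => Int.fract ((n:ℝ) * x i + t i))‖
      ≤ (Metric.closedBall (0 : Fin d → ℝ) (R+1)).indicator (fun _ => ε') x := by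
    intro t ht x
    have htnorm : ‖t‖ ≤ 1 := by
      rw [pi_norm_le_iff_of_nonneg zero_le_one]
      intro i
      have := ht i (Set.mem_univ i)
      rw [Real.norm_eq_abs, abs_le]
      exact ⟨by linarith [this.1], by linarith [this.2]⟩
    have hanorm : ‖((n:ℝ)⁻¹ • t : Fin d → ℝ)‖ ≤ (n:ℝ)⁻¹ := by
      rw [norm_smul, Real.norm_eq_abs, abs_of_nonneg (by positivity)]
      calc (n:ℝ)⁻¹ * ‖t‖ ≤ (n:ℝ)⁻¹ * 1 := by
            exact mul_le_mul_of_nonneg_left htnorm (by positivity)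
        _ = (n:ℝ)⁻¹ := mul_one _
    have humem : (fun i => Int.fract ((n:ℝ) * x i + t i)) ∈ Icc (0 : Fin d → ℝ) 1 := by
      constructor <;> intro i
      · exact Int.fract_nonneg _
      · exact (Int.fract_lt_one _).le
    by_cases hx : ‖x‖ ≤ R + 1
    · have hxmem : x ∈ Metric.closedBall (0 : Fin d → ℝ) (R+1) := by
        rw [Metric.mem_closedBall, dist_zero_right]; exact hx
      rw [Set.indicator_of_mem hxmem]
      have hxK : (x, (fun i => Int.fract ((n:ℝ) * x i + t i))) ∈ K := by
        refine ⟨?_, humem⟩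
        rw [Metric.mem_closedBall, dist_zero_right]; linarith
      have hyK : (x + ((n:ℝ)⁻¹ • t), (fun i => Int.fract ((n:ℝ) * x i + t i))) ∈ K := by
        refine ⟨?_, humem⟩
        simp only [Metric.mem_closedBall, dist_zero_right]
        calc ‖x + ((n:ℝ)⁻¹ • t)‖ ≤ ‖x‖ + ‖((n:ℝ)⁻¹ • t : Fin d → ℝ)‖ := norm_add_le _ _
          _ ≤ (R + 1) + 1 := add_le_add hx (hanorm.trans hinv1)
          _ ≤ R + 2 := by linarith
      have hdist : dist (x + ((n:ℝ)⁻¹ • t), (fun i => Int.fract ((n:ℝ) * x i + t i)))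
          (x, (fun i => Int.fract ((n:ℝ) * x i + t i))) < δ := by
        rw [Prod.dist_eq]
        simp only [dist_self]
        have h1 : dist (x + ((n:ℝ)⁻¹ • t)) x = ‖((n:ℝ)⁻¹ • t : Fin d → ℝ)‖ := by
          simp [dist_eq_norm]
        rw [max_eq_left (by rw [h1]; positivity), h1]
        exact lt_of_le_of_lt hanorm hinvδ
      have := hδ _ hyK _ hxK hdist
      rw [Real.dist_eq] at this
      rw [Real.norm_eq_abs]
      exact this.le
    · push_neg at hx
      have h1 : w (x + ((n:ℝ)⁻¹ • t)) = 0 := by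
        apply hwzero
        calc R = R + 1 - 1 := by ring
          _ < ‖x‖ - ‖((n:ℝ)⁻¹ • t : Fin d → ℝ)‖ := by
              have := hanorm.trans hinv1; linarith
          _ ≤ ‖x + ((n:ℝ)⁻¹ • t)‖ := by
              have := norm_add_le (x + ((n:ℝ)⁻¹ • t)) (-((n:ℝ)⁻¹ • t))
              simp only [add_neg_cancel_right, norm_neg] at this
              linarith
      have h2 : w x = 0 := hwzero x (by linarith)
      simp only [hGdef, h1, h2, mul_zero, sub_zero, norm_zero]
      exact Set.indicator_nonneg (fun _ _ => hε'0.le) x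
  have hne : (n:ℝ) ≠ 0 := ne_of_gt hnR
  have hH : Integrable (fun y : Fin d → ℝ => G (y, fun i => Int.fract ((n:ℝ) * y i))) := by
    simpa using hint (n:ℝ) 0
  have hBint : Integrable (fun t : Fin d → ℝ =>
      ∫ x, G (x, fun i => Int.fract ((n:ℝ) * x i + t i))) (volume.restrict I) :=
    (hprod n).integral_prod_left
  have hball : volume (Metric.closedBall (0 : Fin d → ℝ) (R+1)) < ⊤ :=
    (isCompact_closedBall _ _).measure_lt_top
  have hindint : Integrable
      ((Metric.closedBall (0 : Fin d → ℝ) (R+1)).indicator fun _ => ε') := by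
    rw [integrable_indicator_iff measurableSet_closedBall]
    exact integrableOn_const hball.ne
  have hkey : ∀ t ∈ I,
      ‖(∫ x, G (x, fun i => Int.fract ((n:ℝ) * x i)))
        - ∫ x, G (x, fun i => Int.fract ((n:ℝ) * x i + t i))‖ ≤ ε' * κ := by
    intro t ht
    have hA : Integrable (fun x : Fin d → ℝ =>
        G (x + ((n:ℝ)⁻¹ • t), fun i => Int.fract ((n:ℝ) * x i + t i))) := by
      have h2 := hH.comp_add_right ((n:ℝ)⁻¹ • t)
      refine h2.congr (Eventually.of_forall fun x => ?_)
      have hkey2 : (fun i => Int.fract ((n:ℝ) * (x + (n:ℝ)⁻¹ • t) i))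
          = fun i => Int.fract ((n:ℝ) * x i + t i) := by
        funext i
        simp only [Pi.add_apply, Pi.smul_apply, smul_eq_mul]
        rw [mul_add, ← mul_assoc, mul_inv_cancel₀ hne, one_mul]
      simp only [hkey2]
    rw [← hTn n hn1 t, ← integral_sub hA (hint (n:ℝ) t)]
    calc ‖∫ x, (G (x + ((n:ℝ)⁻¹ • t), fun i => Int.fract ((n:ℝ) * x i + t i))
            - G (x, fun i => Int.fract ((n:ℝ) * x i + t i)))‖
        ≤ ∫ x, ‖G (x + ((n:ℝ)⁻¹ • t), fun i => Int.fract ((n:ℝ) * x i + t i))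
            - G (x, fun i => Int.fract ((n:ℝ) * x i + t i))‖ :=
          norm_integral_le_integral_norm _
      _ ≤ ∫ x, (Metric.closedBall (0 : Fin d → ℝ) (R+1)).indicator (fun _ => ε') x :=
          integral_mono (hA.sub (hint (n:ℝ) t)).norm hindint (hpt t ht)
      _ = ε' * κ := by
          rw [integral_indicator_const _ measurableSet_closedBall, smul_eq_mul, mul_comm]
          rfl
  have hε'κ : ε' * κ < ε := by
    rw [hε'def, div_mul_eq_mul_div, div_lt_iff₀ (by positivity)]
    nlinarith [hκ0, hε]
  have hfinal : ‖(∫ x, G (x, fun i => Int.fract ((n:ℝ) * x i)))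
      - ∫ x, (∫ u in I, f x u) * w x‖ < ε := by
    set c : ℝ := ∫ x, G (x, fun i => Int.fract ((n:ℝ) * x i)) with hcdef
    have h1 : ∫ t in I, (c - ∫ x, G (x, fun i => Int.fract ((n:ℝ) * x i + t i)))
        = c - ∫ t in I, ∫ x, G (x, fun i => Int.fract ((n:ℝ) * x i + t i)) := by
      rw [integral_sub (integrable_const c) hBint]
      congr 1
      simp [measure_univ]
    rw [← hswap n, ← h1]
    calc ‖∫ t in I, (c - ∫ x, G (x, fun i => Int.fract ((n:ℝ) * x i + t i)))‖
        ≤ ∫ t in I, ‖c - ∫ x, G (x, fun i => Int.fract ((n:ℝ) * x i + t i))‖ :=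
          norm_integral_le_integral_norm _
      _ ≤ ∫ _t in I, (ε' * κ) := by
          refine setIntegral_mono_on ((integrable_const c).sub hBint).norm
            (integrable_const _) measurableSet_Ipi fun t ht => hkey t ht
      _ = ε' * κ := by simp [measure_univ]
      _ < ε := hε'κ
  rw [Real.dist_eq]
  simpa [hGdef, Real.norm_eq_abs] using hfinal

lemma main_conv {d : ℕ} (f : (Fin d → ℝ) → (Fin d → ℝ) → ℝ)
    (hf : Continuous fun z : (Fin d → ℝ) × (Fin d → ℝ) => f z.1 z.2)
    (C : ℝ) (hC : ∀ x y, |f x y| ≤ C)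
    (w : (Fin d → ℝ) → ℝ) (hwint : Integrable w) :
    Tendsto (fun n : ℕ => ∫ x, f x (fun i => Int.fract ((n:ℝ) * x i)) * w x) atTop
      (𝓝 (∫ x, (∫ u in Set.univ.pi fun _ : Fin d => Ico (0:ℝ) 1, f x u) * w x)) := by
  haveI := isProb_Ipi (d := d)
  set I : Set (Fin d → ℝ) := Set.univ.pi fun _ : Fin d => Ico (0:ℝ) 1 with hIdef
  set C' : ℝ := |C| with hC'def
  have hC'0 : 0 ≤ C' := abs_nonneg _
  have hC' : ∀ x y, |f x y| ≤ C' := fun x y => (hC x y).trans (le_abs_self C)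
  -- measurability pieces
  have hmeasn : ∀ n : ℕ, Measurable fun x : Fin d → ℝ =>
      f x (fun i => Int.fract ((n:ℝ) * x i)) := by
    intro n
    refine hf.measurable.comp (measurable_id.prodMk ?_)
    exact measurable_pi_lambda _ fun i =>
      measurable_fract.comp ((measurable_pi_apply i).const_mul _)
  have hgm : StronglyMeasurable (fun x : Fin d → ℝ => ∫ u in I, f x u) :=
    (hf.stronglyMeasurable).integral_prod_right
  have hgb : ∀ x, |∫ u in I, f x u| ≤ C' := by
    intro x
    rw [← Real.norm_eq_abs]
    have h := norm_integral_le_of_norm_le_const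
      (μ := (volume : Measure (Fin d → ℝ)).restrict I) (f := fun u => f x u) (C := C')
      (Eventually.of_forall fun u => by rw [Real.norm_eq_abs]; exact hC' x u)
    simpa [measure_univ] using h
  have hTint : ∀ (u : (Fin d → ℝ) → ℝ), Integrable u → ∀ n : ℕ,
      Integrable (fun x => f x (fun i => Int.fract ((n:ℝ) * x i)) * u x) := by
    intro u hu n
    exact hu.bdd_mul (hmeasn n).aestronglyMeasurable
      (Eventually.of_forall fun x => by rw [Real.norm_eq_abs]; exact hC' _ _)
  have hLint : ∀ (u : (Fin d → ℝ) → ℝ), Integrable u →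
      Integrable (fun x => (∫ u' in I, f x u') * u x) := by
    intro u hu
    exact hu.bdd_mul hgm.aestronglyMeasurable
      (Eventually.of_forall fun x => by rw [Real.norm_eq_abs]; exact hgb _)
  rw [Metric.tendsto_atTop]
  intro ε hε
  obtain ⟨g, hgsupp, hgapprox, hgcont, hgint⟩ :=
    hwint.exists_hasCompactSupport_integral_sub_le
      (ε := ε / (8 * (C' + 1))) (by positivity)
  have hdiff : ∀ (φ : (Fin d → ℝ) → ℝ), (∀ x, |φ x| ≤ C') →
      Integrable (fun x => φ x * w x) → Integrable (fun x => φ x * g x) →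
      |(∫ x, φ x * w x) - ∫ x, φ x * g x| ≤ C' * ∫ x, ‖w x - g x‖ := by
    intro φ hφ h1 h2
    rw [← integral_sub h1 h2]
    rw [← Real.norm_eq_abs]
    calc ‖∫ x, (φ x * w x - φ x * g x)‖ ≤ ∫ x, ‖φ x * w x - φ x * g x‖ :=
          norm_integral_le_integral_norm _
      _ ≤ ∫ x, C' * ‖w x - g x‖ := by
          refine integral_mono (h1.sub h2).norm ((hwint.sub hgint).norm.const_mul C')
            fun x => ?_
          rw [← mul_sub, Real.norm_eq_abs, Real.norm_eq_abs, abs_mul]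
          exact mul_le_mul_of_nonneg_right (hφ x) (abs_nonneg _)
      _ = C' * ∫ x, ‖w x - g x‖ := integral_const_mul _ _
  have hcore := core f hf C hC g hgcont hgsupp
  rw [Metric.tendsto_atTop] at hcore
  obtain ⟨N, hN⟩ := hcore (ε / 2) (by positivity)
  refine ⟨N, fun n hn => ?_⟩
  have h1 := hdiff (fun x => f x (fun i => Int.fract ((n:ℝ) * x i)))
    (fun x => hC' _ _) (hTint w hwint n) (hTint g hgint n)
  have h2 := hdiff (fun x => ∫ u in I, f x u) hgb (hLint w hwint) (hLint g hgint)
  have h3 := hN n hn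
  have hsmall : C' * ∫ x, ‖w x - g x‖ ≤ ε / 4 := by
    calc C' * ∫ x, ‖w x - g x‖ ≤ C' * (ε / (8 * (C' + 1))) :=
          mul_le_mul_of_nonneg_left hgapprox hC'0
      _ ≤ ε / 4 := by
          rw [mul_comm, div_mul_eq_mul_div,
            div_le_div_iff₀ (by positivity) (by norm_num : (0:ℝ) < 4)]
          nlinarith [hε.le, hC'0]
  rw [Real.dist_eq] at h3 ⊢
  calc |(∫ x, f x (fun i => Int.fract ((n:ℝ) * x i)) * w x)
        - ∫ x, (∫ u in I, f x u) * w x|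
      ≤ |(∫ x, f x (fun i => Int.fract ((n:ℝ) * x i)) * w x)
          - ∫ x, f x (fun i => Int.fract ((n:ℝ) * x i)) * g x|
        + |(∫ x, f x (fun i => Int.fract ((n:ℝ) * x i)) * g x)
          - ∫ x, (∫ u in I, f x u) * g x|
        + |(∫ x, (∫ u in I, f x u) * g x) - ∫ x, (∫ u in I, f x u) * w x| := by
          have := abs_sub_le
            ((∫ x, f x (fun i => Int.fract ((n:ℝ) * x i)) * w x))
            ((∫ x, (∫ u in I, f x u) * g x))
            ((∫ x, (∫ u in I, f x u) * w x))
          have h4 := abs_sub_le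
            ((∫ x, f x (fun i => Int.fract ((n:ℝ) * x i)) * w x))
            ((∫ x, f x (fun i => Int.fract ((n:ℝ) * x i)) * g x))
            ((∫ x, (∫ u in I, f x u) * g x))
          linarith
    _ < ε := by
        have h2' : |(∫ x, (∫ u in I, f x u) * g x) - ∫ x, (∫ u in I, f x u) * w x|
            ≤ ε / 4 := by
          rw [abs_sub_comm]; exact h2.trans hsmall
        have h1' := h1.trans hsmall
        linarith

theorem stmt4 (d : ℕ) (hd : 1 ≤ d)
    {Ω : Type*} [MeasureSpace Ω] [IsProbabilityMeasure (ℙ : Measure Ω)]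
    (V : Ω → (Fin d → ℝ)) (hV : Measurable V)
    (v : (Fin d → ℝ) → ℝ) (A : Set (Fin d → ℝ))
    (hA : IsOpen A) (hconv : Convex ℝ A)
    (hv1 : ContDiffOn ℝ 1 v A)
    (hv0 : ∀ x ∉ A, v x = 0)
    (hdens : Measure.map V (ℙ : Measure Ω) = volume.withDensity (fun x => ENNReal.ofReal (v x))) :
    ∀ f : (Fin d → ℝ) → (Fin d → ℝ) → ℝ,
      Continuous (fun z : (Fin d → ℝ) × (Fin d → ℝ) => f z.1 z.2) →
      (∃ C : ℝ, ∀ x y, |f x y| ≤ C) →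
      Filter.Tendsto (fun n : ℕ => ∫ ω, f (V ω) (fun i => Int.fract ((n:ℝ) * V ω i)))
        Filter.atTop
        (nhds (∫ ω, ∫ u in Set.Icc (0 : Fin d → ℝ) 1, f (V ω) u)) := by
  intro f hf hCex
  obtain ⟨C, hC⟩ := hCex
  -- a.e. measurability of the density
  have hveq : v = A.indicator v := by
    funext x
    by_cases h : x ∈ A
    · rw [Set.indicator_of_mem h]
    · rw [Set.indicator_of_notMem h, hv0 x h]
  have hvm : AEMeasurable v (volume : Measure (Fin d → ℝ)) := by
    rw [hveq]
    exact (aemeasurable_indicator_iff hA.measurableSet).2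
      ((hv1.continuousOn).aemeasurable hA.measurableSet)
  have hofm : AEMeasurable (fun x => ENNReal.ofReal (v x)) (volume : Measure (Fin d → ℝ)) :=
    ENNReal.measurable_ofReal.comp_aemeasurable hvm
  have htnm : AEMeasurable (fun x => (v x).toNNReal) (volume : Measure (Fin d → ℝ)) :=
    measurable_real_toNNReal.comp_aemeasurable hvm
  -- total mass one
  haveI hprobν : IsProbabilityMeasure (Measure.map V (ℙ : Measure Ω)) :=
    Measure.isProbabilityMeasure_map hV.aemeasurable
  have hmass : ∫⁻ x, ENNReal.ofReal (v x) = 1 := by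
    have h := hprobν.measure_univ
    rwa [hdens, withDensity_apply _ MeasurableSet.univ, Measure.restrict_univ] at h
  set w : (Fin d → ℝ) → ℝ := fun x => (ENNReal.ofReal (v x)).toReal with hwdef
  have hwint : Integrable w := by
    refine integrable_toReal_of_lintegral_ne_top hofm ?_
    rw [hmass]; exact ENNReal.one_ne_top
  -- transfer the moving integrals
  have hfun : ∀ n : ℕ, (∫ ω, f (V ω) (fun i => Int.fract ((n:ℝ) * V ω i)))
      = ∫ x, f x (fun i => Int.fract ((n:ℝ) * x i)) * w x := by
    intro n
    have hmeasn : Measurable fun x : Fin d → ℝ =>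
        f x (fun i => Int.fract ((n:ℝ) * x i)) := by
      refine hf.measurable.comp (measurable_id.prodMk ?_)
      exact measurable_pi_lambda _ fun i =>
        measurable_fract.comp ((measurable_pi_apply i).const_mul _)
    rw [← integral_map hV.aemeasurable hmeasn.aestronglyMeasurable, hdens,
      show (fun x => ENNReal.ofReal (v x)) = (fun x => (((v x).toNNReal : ℝ≥0) : ℝ≥0∞))
        from rfl,
      integral_withDensity_eq_integral_smul₀ htnm]
    refine integral_congr_ae (Eventually.of_forall fun x => ?_)
    simp only [NNReal.smul_def, smul_eq_mul]
    rw [mul_comm]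
    congr 1
  -- identify the Icc and the pi-Ico integrals
  have hIeq : (volume : Measure (Fin d → ℝ)).restrict (Set.Icc 0 1)
      = (volume : Measure (Fin d → ℝ)).restrict (Set.univ.pi fun _ : Fin d => Ico (0:ℝ) 1) := by
    refine Measure.restrict_congr_set ?_
    rw [ae_eq_set]
    constructor
    · refine measure_mono_null (fun x hx => ?_)
        (measure_iUnion_null (ι := Fin d) (s := fun i => {y : Fin d → ℝ | y i = 1}) fun i => ?_)
      · obtain ⟨hx1, hx2⟩ := hx
        rw [Set.mem_Icc] at hx1
        simp only [Set.mem_pi, Set.mem_univ, forall_true_left, not_forall] at hx2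
        obtain ⟨i, hi⟩ := hx2
        refine Set.mem_iUnion.2 ⟨i, ?_⟩
        have h1 : (0:ℝ) ≤ x i := hx1.1 i
        have h2 : x i ≤ 1 := hx1.2 i
        rw [Set.mem_Ico] at hi
        push_neg at hi
        have h3 : (1:ℝ) ≤ x i := hi h1
        simp only [Set.mem_setOf_eq]
        exact le_antisymm h2 h3
      · rw [volume_pi]
        exact Measure.pi_hyperplane _ i 1
    · refine measure_mono_null (fun x hx => ?_) (measure_empty (μ := volume))
      obtain ⟨hx1, hx2⟩ := hx
      exfalso
      refine hx2 ⟨fun i => (hx1 i (Set.mem_univ i)).1, fun i => (hx1 i (Set.mem_univ i)).2.le⟩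
  have hlim : (∫ ω, ∫ u in Set.Icc (0 : Fin d → ℝ) 1, f (V ω) u)
      = ∫ x, (∫ u in Set.univ.pi fun _ : Fin d => Ico (0:ℝ) 1, f x u) * w x := by
    have hgm : StronglyMeasurable (fun x : Fin d → ℝ => ∫ u in Set.Icc (0 : Fin d → ℝ) 1, f x u) :=
      (hf.stronglyMeasurable).integral_prod_right
    rw [← integral_map hV.aemeasurable hgm.aestronglyMeasurable, hdens,
      show (fun x => ENNReal.ofReal (v x)) = (fun x => (((v x).toNNReal : ℝ≥0) : ℝ≥0∞))
        from rfl,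
      integral_withDensity_eq_integral_smul₀ htnm]
    refine integral_congr_ae (Eventually.of_forall fun x => ?_)
    simp only [NNReal.smul_def, smul_eq_mul]
    rw [mul_comm, hIeq]
    congr 1
  rw [show (fun n : ℕ => ∫ ω, f (V ω) (fun i => Int.fract ((n:ℝ) * V ω i)))
      = fun n : ℕ => ∫ x, f x (fun i => Int.fract ((n:ℝ) * x i)) * w x from funext hfun, hlim]
  exact main_conv f hf C hC w hwint
end

section
/- Let f, v be as follows: v : ℝ^d → ℝ_+ is a C^1 probability density vanishing outside an open convex set A, and f : ℝ^d × ℝ^d → ℝ is a C^1 function vanishing outside some closed ball contained in A × ℝ^d. Then for every ρ > 0, | ∫_{ℝ^d} f(x, {x/ρ}) v(x) dx − ∫_{ℝ^d} (∫_{[0,1]^d} f(x,u) du) v(x) dx | ≤ K ρ for a constant K independent of ρ. -/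
open MeasureTheory
open Pointwise

open Set in
/-- Auxiliary: the standard basis of `Fin d → ℝ`. -/
noncomputable def stdBasis (d : ℕ) : Module.Basis (Fin d) ℝ (Fin d → ℝ) := Pi.basisFun ℝ (Fin d)

instance stdCountable (d : ℕ) :
    Countable ↥(Submodule.span ℤ (Set.range (stdBasis d))).toAddSubgroup :=
  inferInstanceAs (Countable ↥(Submodule.span ℤ (Set.range (stdBasis d))))

open Set in
theorem stdFD_vol (d : ℕ) : volume (ZSpan.fundamentalDomain (stdBasis d)) = 1 := by
  rw [stdBasis, ZSpan.fundamentalDomain_pi_basisFun]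
  simp [volume_pi_pi, Real.volume_Ico]

open Set in
theorem stdFD_ae (d : ℕ) :
    (ZSpan.fundamentalDomain (stdBasis d) : Set (Fin d → ℝ)) =ᵐ[volume]
      Icc (0 : Fin d → ℝ) 1 := by
  rw [stdBasis, ZSpan.fundamentalDomain_pi_basisFun]
  have := MeasureTheory.Measure.univ_pi_Ico_ae_eq_Icc
    (μ := fun _ : Fin d => (volume : Measure ℝ)) (f := fun _ => (0:ℝ)) (g := fun _ => (1:ℝ))
  simpa [MeasureTheory.volume_pi, Set.pi_univ_Icc, Pi.zero_def, Pi.one_def] using this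

open Set in
theorem stdFD_subset (d : ℕ) :
    (ZSpan.fundamentalDomain (stdBasis d) : Set (Fin d → ℝ)) ⊆ Icc (0 : Fin d → ℝ) 1 := by
  rw [stdBasis, ZSpan.fundamentalDomain_pi_basisFun, ← Set.pi_univ_Icc]
  exact Set.pi_mono fun i _ => Set.Ico_subset_Icc_self

open Set in
theorem stdFD_mem_Ico (d : ℕ) {t : Fin d → ℝ}
    (ht : t ∈ ZSpan.fundamentalDomain (stdBasis d)) (i : Fin d) : t i ∈ Ico (0:ℝ) 1 := by
  rw [ZSpan.mem_fundamentalDomain] at ht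
  simpa [stdBasis] using ht i

theorem stdLattice_int (d : ℕ) (g : ↥(Submodule.span ℤ (Set.range (stdBasis d))).toAddSubgroup)
    (i : Fin d) : ∃ z : ℤ, (g : Fin d → ℝ) i = (z : ℝ) := by
  have hg : (g : Fin d → ℝ) ∈ Submodule.span ℤ (Set.range (stdBasis d)) := g.2
  rw [Module.Basis.mem_span_iff_repr_mem] at hg
  obtain ⟨z, hz⟩ := hg i
  exact ⟨z, by simpa [stdBasis] using hz.symm⟩

theorem stmt5 (d : ℕ) (hd : 1 ≤ d)
    (v : (Fin d → ℝ) → ℝ) (A : Set (Fin d → ℝ))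
    (hA : IsOpen A) (hconv : Convex ℝ A)
    (hv1 : ContDiffOn ℝ 1 v A) (hv0 : ∀ x ∉ A, v x = 0)
    (hvpos : ∀ x, 0 ≤ v x) (hvint : ∫ x, v x = 1)
    (f : (Fin d → ℝ) × (Fin d → ℝ) → ℝ) (hf : ContDiff ℝ 1 f)
    (c : (Fin d → ℝ) × (Fin d → ℝ)) (r : ℝ)
    (hball : Metric.closedBall c r ⊆ A ×ˢ (Set.univ : Set (Fin d → ℝ)))
    (hsupp : ∀ z ∉ Metric.closedBall c r, f z = 0) :
    ∃ K : ℝ, ∀ ρ : ℝ, 0 < ρ →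
      |(∫ x, f (x, fun i => Int.fract (x i / ρ)) * v x) -
        ∫ x, (∫ u in Set.Icc (0 : Fin d → ℝ) 1, f (x, u)) * v x| ≤ K * ρ := by
  classical
  set φ : (Fin d → ℝ) × (Fin d → ℝ) → ℝ := fun p => f p * v p.1 with hφdef
  have hφsupp : ∀ p ∉ Metric.closedBall c r, φ p = 0 := by
    intro p hp; simp [hφdef, hsupp p hp]
  have hφc1 : ContDiff ℝ 1 φ := by
    rw [contDiff_iff_contDiffAt]
    intro p
    by_cases hp : p ∈ A ×ˢ (Set.univ : Set (Fin d → ℝ))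
    · have hAopen : IsOpen (A ×ˢ (Set.univ : Set (Fin d → ℝ))) := hA.prod isOpen_univ
      have hmul : ContDiffOn ℝ 1 φ (A ×ˢ (Set.univ : Set (Fin d → ℝ))) := by
        apply ContDiffOn.mul hf.contDiffOn
        exact hv1.comp contDiff_fst.contDiffOn (fun q hq => hq.1)
      exact hmul.contDiffAt (hAopen.mem_nhds hp)
    · have hpc : p ∈ (Metric.closedBall c r)ᶜ := fun h => hp (hball h)
      have hev : φ =ᶠ[nhds p] fun _ => (0:ℝ) := by
        filter_upwards [Metric.isClosed_closedBall.isOpen_compl.mem_nhds hpc] with q hq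
        exact hφsupp q hq
      exact (contDiffAt_const (c := (0:ℝ))).congr_of_eventuallyEq hev
  have hφcs : HasCompactSupport φ :=
    HasCompactSupport.intro (isCompact_closedBall c r) hφsupp
  obtain ⟨L, hL⟩ : ∃ L : NNReal, LipschitzWith L φ :=
    hφc1.lipschitzWith_of_hasCompactSupport hφcs one_ne_zero
  obtain ⟨M, hM⟩ : ∃ M, ∀ z, ‖φ z‖ ≤ M := hφcs.exists_bound_of_continuous hφc1.continuous
  set B : Set (Fin d → ℝ) := Metric.closedBall c.1 r with hBdef
  have hBsupp : ∀ p : (Fin d → ℝ) × (Fin d → ℝ), p.1 ∉ B → φ p = 0 := by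
    intro p hp
    apply hφsupp
    intro hmem
    apply hp
    rw [hBdef, Metric.mem_closedBall]
    rw [Metric.mem_closedBall, Prod.dist_eq] at hmem
    exact le_trans (le_max_left _ _) hmem
  have hBmeas : MeasurableSet B := Metric.isClosed_closedBall.measurableSet
  have hBvol : volume B < ⊤ := measure_closedBall_lt_top
  refine ⟨2 * L * (volume B).toReal, fun ρ hρ => ?_⟩
  have hI2 : (∫ x, (∫ u in Set.Icc (0 : Fin d → ℝ) 1, f (x, u)) * v x) =
      ∫ x, ∫ u in Set.Icc (0 : Fin d → ℝ) 1, φ (x, u) := by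
    congr 1
    funext x
    rw [← integral_mul_const]
  have hI1 : (∫ x, f (x, fun i => Int.fract (x i / ρ)) * v x) =
      ∫ x, φ (x, fun i => Int.fract (x i / ρ)) := rfl
  rw [hI1, hI2]
  have hρ0 : ρ ≠ 0 := hρ.ne'
  have hM0 : 0 ≤ M := le_trans (norm_nonneg _) (hM 0)
  set g₁ : (Fin d → ℝ) → ℝ := fun x => φ (x, fun i => Int.fract (x i / ρ)) with hg1def
  set g₂ : (Fin d → ℝ) → ℝ := fun x => ∫ u in Set.Icc (0 : Fin d → ℝ) 1, φ (x, u) with hg2def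
  -- volume of Icc 0 1 is 1
  have hIccvol : volume (Set.Icc (0 : Fin d → ℝ) 1) = 1 := by
    simp [Real.volume_Icc_pi]
  -- integrability of g₁
  have hmeas1 : Measurable fun x : Fin d → ℝ => (x, fun i => Int.fract (x i / ρ)) := by
    refine measurable_id.prodMk (measurable_pi_lambda _ fun i => ?_)
    exact measurable_fract.comp (by fun_prop)
  have hind : Integrable (B.indicator fun _ => M) := by
    rw [integrable_indicator_iff hBmeas]
    exact integrableOn_const hBvol.ne
  have hint1 : Integrable g₁ := by
    refine Integrable.mono' hind ((hφc1.continuous.measurable.comp hmeas1).aestronglyMeasurable)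
      (Filter.Eventually.of_forall fun x => ?_)
    by_cases hx : x ∈ B
    · simpa [Set.indicator_of_mem hx] using hM _
    · simp [hg1def, Set.indicator_of_notMem hx, hBsupp (x, _) hx]
  have hsm2 : StronglyMeasurable g₂ :=
    MeasureTheory.StronglyMeasurable.integral_prod_right' (f := φ)
      hφc1.continuous.stronglyMeasurable
  haveI : IsFiniteMeasure ((volume : Measure (Fin d → ℝ)).restrict (Set.Icc 0 1)) := by
    constructor
    rw [Measure.restrict_apply_univ, hIccvol]
    exact ENNReal.one_lt_top
  have hint2 : Integrable g₂ := by
    refine Integrable.mono' hind hsm2.aestronglyMeasurable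
      (Filter.Eventually.of_forall fun x => ?_)
    by_cases hx : x ∈ B
    · rw [Set.indicator_of_mem hx]
      calc ‖g₂ x‖ ≤ M * ((volume : Measure (Fin d → ℝ)).restrict (Set.Icc 0 1)
            Set.univ).toReal :=
          norm_integral_le_of_norm_le_const (Filter.Eventually.of_forall fun u => hM _)
        _ = M := by rw [Measure.restrict_apply_univ, hIccvol]; simp
    · rw [Set.indicator_of_notMem hx]
      have hz : g₂ x = 0 := by
        rw [hg2def]
        simp only
        have : ∀ u : Fin d → ℝ, φ (x, u) = 0 := fun u => hBsupp (x, u) hx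
        simp [this]
      simp [hz]
  -- scaling x = ρ • y
  have hfinrank : Module.finrank ℝ (Fin d → ℝ) = d := Module.finrank_fin_fun ℝ
  have hscale : ∀ h : (Fin d → ℝ) → ℝ, ∫ x, h x = ρ ^ d * ∫ y, h (ρ • y) := by
    intro h
    rw [Measure.integral_comp_smul volume h ρ, hfinrank, smul_eq_mul, ← mul_assoc,
      abs_of_nonneg (inv_nonneg.2 (pow_nonneg hρ.le d)),
      mul_inv_cancel₀ (pow_ne_zero d hρ0), one_mul]
  set Ψ : (Fin d → ℝ) → ℝ := fun y => g₁ (ρ • y) - g₂ (ρ • y) with hΨdef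
  have hints1 : Integrable fun y => g₁ (ρ • y) := hint1.comp_smul hρ0
  have hints2 : Integrable fun y => g₂ (ρ • y) := hint2.comp_smul hρ0
  have hΨint : Integrable Ψ := hints1.sub hints2
  have hsplit : (∫ x, g₁ x) - ∫ x, g₂ x = ρ ^ d * ∫ y, Ψ y := by
    rw [hΨdef]
    rw [integral_sub hints1 hints2, hscale g₁, hscale g₂, mul_sub]
  -- the blown-up support
  set T : Set (Fin d → ℝ) := ρ⁻¹ • B with hTdef
  have hTmem : ∀ y : Fin d → ℝ, y ∈ T ↔ ρ • y ∈ B := by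
    intro y
    rw [hTdef, Set.mem_smul_set_iff_inv_smul_mem₀ (inv_ne_zero hρ0), inv_inv]
  have hTmeas : MeasurableSet T := by
    rw [hTdef]
    exact hBmeas.const_smul₀ ρ⁻¹
  have hTvol : volume T = ENNReal.ofReal (|ρ⁻¹| ^ d) * volume B := by
    rw [hTdef, Measure.addHaar_smul, hfinrank, abs_pow]
  have hTvolfin : volume T ≠ ⊤ := by
    rw [hTvol]
    exact ENNReal.mul_ne_top ENNReal.ofReal_ne_top hBvol.ne
  have hcore : |∫ y, Ψ y| ≤ 2 * L * ρ * (volume T).toReal := by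
    set b := stdBasis d with hbdef
    set F := ZSpan.fundamentalDomain b with hFdef
    have hFmeas : MeasurableSet F := ZSpan.fundamentalDomain_measurableSet b
    have hFvol : volume F = 1 := stdFD_vol d
    have hFae : (F : Set (Fin d → ℝ)) =ᵐ[volume] Set.Icc 0 1 := stdFD_ae d
    have hrestr : (volume : Measure (Fin d → ℝ)).restrict (Set.Icc 0 1) = volume.restrict F :=
      Measure.restrict_congr_set hFae.symm
    have hFsub : F ⊆ Set.Icc (0 : Fin d → ℝ) 1 := stdFD_subset d
    haveI : IsFiniteMeasure ((volume : Measure (Fin d → ℝ)).restrict F) :=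
      ⟨by rw [Measure.restrict_apply_univ, hFvol]; exact ENNReal.one_lt_top⟩
    have key := (ZSpan.isAddFundamentalDomain' b volume).integral_eq_tsum'' Ψ hΨint
    have hsum0 := (ZSpan.isAddFundamentalDomain' b volume).measure_eq_tsum' T
    set Λ := (Submodule.span ℤ (Set.range (b : Fin d → Fin d → ℝ))).toAddSubgroup with hΛdef
    have hterm_ne_top : ∀ g : ↥Λ, volume (T ∩ (g +ᵥ F)) ≠ ⊤ := fun g =>
      ((measure_mono Set.inter_subset_left).trans_lt (lt_top_iff_ne_top.2 hTvolfin)).ne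
    have hbound : ∀ g : ↥Λ, ‖∫ y in F, Ψ (g +ᵥ y)‖ ≤
        2 * L * ρ * (volume (T ∩ (g +ᵥ F))).toReal := by
      intro g
      set n : Fin d → ℝ := (g : Fin d → ℝ) with hndef
      have hconstF : ∀ C : ℝ, IntegrableOn (fun _ : Fin d → ℝ => C) F :=
        fun C => integrableOn_const (by rw [hFvol]; exact ENNReal.one_lt_top.ne)
      set er : ℝ := (volume (T ∩ (g +ᵥ F))).toReal with herdef
      have her0 : 0 ≤ er := ENNReal.toReal_nonneg
      set χ : (Fin d → ℝ) → ℝ := T.indicator (fun _ => (1:ℝ)) with hχdef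
      have hχ0 : ∀ y, 0 ≤ χ y := fun y => Set.indicator_nonneg (fun _ _ => zero_le_one) y
      have hχ1 : ∀ y, χ y ≤ 1 := fun y => Set.indicator_le_self' (fun _ _ => zero_le_one) y
      -- rewrite Ψ on translated fundamental domain
      have hfr : ∀ y ∈ F, Ψ (g +ᵥ y) =
          φ (ρ • (n + y), y) - ∫ u in F, φ (ρ • (n + y), u) := by
        intro y hy
        show Ψ (n + y) = _
        have h1 : (fun i => Int.fract ((ρ • (n + y)) i / ρ)) = y := by
          funext i
          have h2 : (ρ • (n + y)) i / ρ = (n + y) i := by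
            simp only [Pi.smul_apply, smul_eq_mul]
            field_simp
          rw [h2]
          obtain ⟨z, hz⟩ := stdLattice_int d g i
          have hz' : n i = (z : ℝ) := hz
          have hyi := stdFD_mem_Ico d hy i
          rw [Pi.add_apply, hz', Int.fract_intCast_add, Int.fract_eq_self.2 ⟨hyi.1, hyi.2⟩]
        rw [hΨdef]
        simp only [hg1def, hg2def]
        rw [h1, hrestr]
      set Q : (Fin d → ℝ) → ℝ := fun y => ∫ u in F, φ (ρ • (n + y), u) with hQdef
      set P : ℝ := ∫ u in F, φ (ρ • (n + u), u) with hPdef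
      -- integrability facts on F
      have hIccCompact : IsCompact (Set.Icc (0 : Fin d → ℝ) 1) := isCompact_Icc
      have hcont1 : Continuous fun y : Fin d → ℝ => φ (ρ • (n + y), y) := by
        apply hφc1.continuous.comp
        exact ((continuous_const.add continuous_id).const_smul ρ).prodMk continuous_id
      have hintP' : IntegrableOn (fun y => φ (ρ • (n + y), y)) F := by
        exact (hcont1.continuousOn.integrableOn_compact hIccCompact).mono_set hFsub
      have hintQu : ∀ y : Fin d → ℝ, IntegrableOn (fun u => φ (ρ • (n + y), u)) F := by
        intro y
        have : Continuous fun u : Fin d → ℝ => φ (ρ • (n + y), u) :=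
          hφc1.continuous.comp (continuous_const.prodMk continuous_id)
        exact (this.continuousOn.integrableOn_compact hIccCompact).mono_set hFsub
      have hsmQ : StronglyMeasurable Q := by
        apply MeasureTheory.StronglyMeasurable.integral_prod_right'
          (f := fun q : (Fin d → ℝ) × (Fin d → ℝ) => φ (ρ • (n + q.1), q.2))
        exact (hφc1.continuous.comp
          (((continuous_const.add continuous_fst).const_smul ρ).prodMk
            continuous_snd)).stronglyMeasurable
      have hintQ : IntegrableOn Q F := by
        refine Integrable.mono' (hconstF M)
          hsmQ.aestronglyMeasurable (Filter.Eventually.of_forall fun y => ?_)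
        calc ‖Q y‖ ≤ M * ((volume : Measure (Fin d → ℝ)).restrict F Set.univ).toReal :=
            norm_integral_le_of_norm_le_const (Filter.Eventually.of_forall fun u => hM _)
          _ = M := by rw [Measure.restrict_apply_univ, hFvol]; simp
      have hχmeas : ∀ m : Fin d → ℝ, Measurable fun u : Fin d → ℝ => χ (m + u) := by
        intro m
        exact ((measurable_const.indicator hTmeas).comp (measurable_id.const_add m))
      have hintχ : ∀ m : Fin d → ℝ, IntegrableOn (fun u => χ (m + u)) F := by
        intro m
        refine Integrable.mono' (hconstF 1)
          (hχmeas m).aestronglyMeasurable (Filter.Eventually.of_forall fun u => ?_)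
        rw [Real.norm_eq_abs, abs_of_nonneg (hχ0 _)]
        exact hχ1 _
      -- the translated indicator integral
      have hE : ∫ u in F, χ (n + u) = er := by
        have hpre : MeasurableSet ((fun u : Fin d → ℝ => n + u) ⁻¹' T) :=
          hTmeas.preimage (measurable_id.const_add n)
        have h1 : (fun u : Fin d → ℝ => χ (n + u)) =
            ((fun u : Fin d → ℝ => n + u) ⁻¹' T).indicator (fun _ => (1:ℝ)) := by
          funext u
          by_cases h : n + u ∈ T
          · rw [hχdef, Set.indicator_of_mem h, Set.indicator_of_mem (Set.mem_preimage.2 h)]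
          · rw [hχdef, Set.indicator_of_notMem h,
              Set.indicator_of_notMem (fun hh => h (Set.mem_preimage.1 hh))]
        rw [h1, integral_indicator_const _ hpre, measureReal_restrict_apply hpre, measureReal_def, smul_eq_mul, mul_one]
        congr 1
        have h2 : n +ᵥ ((fun u : Fin d → ℝ => n + u) ⁻¹' T ∩ F) = T ∩ (n +ᵥ F) := by
          ext x
          simp only [Set.mem_vadd_set, Set.mem_inter_iff, Set.mem_preimage, vadd_eq_add]
          constructor
          · rintro ⟨y, ⟨hyT, hyF⟩, rfl⟩
            exact ⟨hyT, ⟨y, hyF, rfl⟩⟩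
          · rintro ⟨hxT, ⟨y, hyF, rfl⟩⟩
            exact ⟨y, ⟨hxT, hyF⟩, rfl⟩
        have h3 : volume ((fun u : Fin d → ℝ => n + u) ⁻¹' T ∩ F) =
            volume (T ∩ (n +ᵥ F)) := by
          rw [← h2, measure_vadd]
        rw [h3]
        rfl
      -- pointwise Lipschitz bound
      have hpt : ∀ y ∈ F, ∀ u ∈ F, ‖φ (ρ • (n + u), u) - φ (ρ • (n + y), u)‖ ≤
          (L : ℝ) * ρ * (χ (n + y) + χ (n + u)) := by
        intro y hy u hu
        by_cases hcase : (n + y) ∈ T ∨ (n + u) ∈ T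
        · have hd1 : dist u y ≤ 1 := by
            rw [dist_pi_le_iff zero_le_one]
            intro i
            have h1 := stdFD_mem_Ico d hy i
            have h2 := stdFD_mem_Ico d hu i
            rw [Real.dist_eq, abs_le]
            constructor <;> [linarith [h1.2, h2.1]; linarith [h1.1, h2.2]]
          have hdist : dist ((ρ • (n + u), u) : (Fin d → ℝ) × (Fin d → ℝ)) (ρ • (n + y), u) ≤ ρ := by
            rw [Prod.dist_eq]
            apply max_le
            · have h4 : dist (ρ • (n + u)) (ρ • (n + y)) = ρ * dist (n + u) (n + y) := by
                rw [dist_smul₀, Real.norm_eq_abs, abs_of_pos hρ]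
              rw [h4, dist_add_left]
              calc ρ * dist u y ≤ ρ * 1 := mul_le_mul_of_nonneg_left hd1 hρ.le
                _ = ρ := mul_one ρ
            · simpa using hρ.le
          have hLip : ‖φ (ρ • (n + u), u) - φ (ρ • (n + y), u)‖ ≤ (L : ℝ) * ρ := by
            rw [← dist_eq_norm]
            calc dist (φ (ρ • (n + u), u)) (φ (ρ • (n + y), u)) ≤
                (L : ℝ) * dist ((ρ • (n + u), u) : (Fin d → ℝ) × (Fin d → ℝ)) (ρ • (n + y), u) :=
                hL.dist_le_mul _ _
              _ ≤ (L : ℝ) * ρ := mul_le_mul_of_nonneg_left hdist L.2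
          have hχge : 1 ≤ χ (n + y) + χ (n + u) := by
            rcases hcase with h | h
            · have h5 : χ (n + y) = 1 := by rw [hχdef, Set.indicator_of_mem h]
              linarith [hχ0 (n + u)]
            · have h5 : χ (n + u) = 1 := by rw [hχdef, Set.indicator_of_mem h]
              linarith [hχ0 (n + y)]
          calc ‖φ (ρ • (n + u), u) - φ (ρ • (n + y), u)‖ ≤ (L : ℝ) * ρ := hLip
            _ = (L : ℝ) * ρ * 1 := (mul_one _).symm
            _ ≤ (L : ℝ) * ρ * (χ (n + y) + χ (n + u)) := by
                apply mul_le_mul_of_nonneg_left hχge (by positivity)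
        · push_neg at hcase
          have h1 : φ (ρ • (n + u), u) = 0 :=
            hBsupp (ρ • (n + u), u) (fun hmem => hcase.2 ((hTmem _).2 hmem))
          have h2 : φ (ρ • (n + y), u) = 0 :=
            hBsupp (ρ • (n + y), u) (fun hmem => hcase.1 ((hTmem _).2 hmem))
          rw [h1, h2, sub_zero, norm_zero]
          have := hχ0 (n + y)
          have := hχ0 (n + u)
          positivity
      -- inner bound
      have hinner : ∀ y ∈ F, ‖P - Q y‖ ≤ (L : ℝ) * ρ * (χ (n + y) + er) := by
        intro y hy
        have hPQ : P - Q y = ∫ u in F, (φ (ρ • (n + u), u) - φ (ρ • (n + y), u)) :=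
          (integral_sub hintP' (hintQu y)).symm
        rw [hPQ]
        calc ‖∫ u in F, (φ (ρ • (n + u), u) - φ (ρ • (n + y), u))‖ ≤
            ∫ u in F, ‖φ (ρ • (n + u), u) - φ (ρ • (n + y), u)‖ :=
            norm_integral_le_integral_norm _
          _ ≤ ∫ u in F, (L : ℝ) * ρ * (χ (n + y) + χ (n + u)) := by
              apply setIntegral_mono_on (hintP'.sub (hintQu y)).norm
                (((hconstF _).add
                  (hintχ n)).const_mul _) hFmeas
              exact fun u hu => hpt y hy u hu
          _ = (L : ℝ) * ρ * (χ (n + y) + er) := by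
              rw [integral_const_mul, integral_add
                (hconstF _)
                (hintχ n), setIntegral_const, hE, measureReal_def, hFvol]
              simp
      -- main chain
      have hmain : ∫ y in F, Ψ (g +ᵥ y) = ∫ y in F, (P - Q y) := by
        have e1 : ∫ y in F, Ψ (g +ᵥ y) = ∫ y in F, (φ (ρ • (n + y), y) - Q y) := by
          apply setIntegral_congr_fun hFmeas
          intro y hy
          exact hfr y hy
        have e2 : ∫ y in F, (P - Q y) = (∫ _ in F, P) - ∫ y in F, Q y :=
          integral_sub (hconstF _) hintQ
        have e3 : (∫ _ in F, P : ℝ) = P := by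
          rw [setIntegral_const, measureReal_def, hFvol]
          simp
        rw [e1, integral_sub hintP' hintQ, e2, e3]
      rw [hmain]
      calc ‖∫ y in F, (P - Q y)‖ ≤ ∫ y in F, ‖P - Q y‖ := norm_integral_le_integral_norm _
        _ ≤ ∫ y in F, (L : ℝ) * ρ * (χ (n + y) + er) := by
            apply setIntegral_mono_on
              ((hconstF _).sub hintQ).norm
              (((hintχ n).add (hconstF _)).const_mul _)
              hFmeas
            exact fun y hy => hinner y hy
        _ = (L : ℝ) * ρ * (er + er) := by
            rw [integral_const_mul, integral_add (hintχ n)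
              (hconstF _),
              setIntegral_const, hE, measureReal_def, hFvol]
            simp
        _ = 2 * (L : ℝ) * ρ * er := by ring
    -- sum up
    have hsummable : Summable fun g : ↥Λ => (volume (T ∩ (g +ᵥ F))).toReal := by
      apply ENNReal.summable_toReal
      rw [← hsum0]
      exact hTvolfin
    have htsum : HasSum (fun g : ↥Λ => 2 * (L : ℝ) * ρ * (volume (T ∩ (g +ᵥ F))).toReal)
        (2 * (L : ℝ) * ρ * (volume T).toReal) := by
      have h1 : ∑' g : ↥Λ, (volume (T ∩ (g +ᵥ F))).toReal = (volume T).toReal := by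
        rw [hsum0, ENNReal.tsum_toReal_eq hterm_ne_top]
      have h2 := hsummable.hasSum
      rw [h1] at h2
      exact h2.mul_left _
    rw [key, ← Real.norm_eq_abs]
    exact tsum_of_norm_bounded htsum hbound
  have harith : ρ ^ d * (2 * L * ρ * (volume T).toReal) = 2 * L * (volume B).toReal * ρ := by
    rw [hTvol, ENNReal.toReal_mul, ENNReal.toReal_ofReal (by positivity)]
    rw [abs_of_nonneg (inv_nonneg.2 hρ.le)]
    field_simp
    have hρd : ρ ^ d * ρ⁻¹ ^ d = 1 := by rw [← mul_pow, mul_inv_cancel₀ hρ0, one_pow]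
    linear_combination ((L : ℝ) * (volume B).toReal) * hρd
  calc |(∫ x, g₁ x) - ∫ x, g₂ x| = ρ ^ d * |∫ y, Ψ y| := by
        rw [hsplit, abs_mul, abs_of_nonneg (pow_nonneg hρ.le d)]
    _ ≤ ρ ^ d * (2 * L * ρ * (volume T).toReal) := by
        apply mul_le_mul_of_nonneg_left hcore (pow_nonneg hρ.le d)
    _ = 2 * L * (volume B).toReal * ρ := harith
end

section
/- Let p ∈ (0,1), β ∈ (0,2), ε > 0, and Φ_ρ as above. Then for any r ∈ [p,2] and any ρ_1, ρ_2 ≥ ε there exists a constant K = K(ε,p,β,r) such that |Φ_{ρ_1}(x) − Φ_{ρ_2}(x)| ≤ K |ρ_1^β − ρ_2^β| · |x|^r for all x ∈ ℝ. -/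
open Real MeasureTheory Set

private lemma expdiff {a b m : ℝ} (hma : m ≤ a) (hmb : m ≤ b) :
    |Real.exp (-a) - Real.exp (-b)| ≤ |a - b| * Real.exp (-m) := by
  wlog h : b ≤ a generalizing a b
  · rw [abs_sub_comm, abs_sub_comm a b]; exact this hmb hma (le_of_not_ge h)
  have h1 : Real.exp (-b) * Real.exp (b - a) = Real.exp (-a) := by
    rw [← Real.exp_add]; ring_nf
  have h2 := Real.add_one_le_exp (b - a)
  have h3 : Real.exp (-b) ≤ Real.exp (-m) := Real.exp_le_exp.2 (by linarith)
  have h4 : (0:ℝ) ≤ Real.exp (-b) := (Real.exp_pos _).le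
  have h5 : Real.exp (-a) ≤ Real.exp (-b) := Real.exp_le_exp.2 (by linarith)
  rw [abs_of_nonpos (by linarith : Real.exp (-a) - Real.exp (-b) ≤ 0),
    abs_of_nonneg (by linarith : (0:ℝ) ≤ a - b)]
  nlinarith

private lemma cosbound {r : ℝ} (hr0 : 0 < r) (hr2 : r ≤ 2) (t : ℝ) :
    1 - Real.cos t ≤ 2 * |t| ^ r := by
  rcases eq_or_ne t 0 with rfl | ht
  · simp [Real.zero_rpow hr0.ne']
  rcases le_or_gt |t| 1 with h | h
  · have h1 : 1 - Real.cos t ≤ t ^ 2 / 2 := by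
      linarith [Real.one_sub_sq_div_two_le_cos (x := t)]
    have h2 : |t| ^ (2:ℝ) ≤ |t| ^ r :=
      Real.rpow_le_rpow_of_exponent_ge (abs_pos.2 ht) h hr2
    have h3 : |t| ^ (2:ℝ) = t ^ 2 := by
      rw [show (2:ℝ) = ((2:ℕ):ℝ) by norm_num, Real.rpow_natCast, sq_abs]
    have h4 : (0:ℝ) ≤ |t| ^ r := Real.rpow_nonneg (abs_nonneg t) r
    calc 1 - Real.cos t ≤ t ^ 2 / 2 := h1
      _ ≤ t ^ 2 := by linarith [sq_nonneg t]
      _ = |t| ^ (2:ℝ) := h3.symm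
      _ ≤ |t| ^ r := h2
      _ ≤ 2 * |t| ^ r := by linarith
  · have h1 : 1 ≤ |t| ^ r := Real.one_le_rpow h.le hr0.le
    nlinarith [Real.neg_one_le_cos t]

private lemma int_aux {s b β : ℝ} (hs : -1 < s) (hβ : 0 < β) (hb : 0 < b) :
    IntegrableOn (fun x : ℝ => x ^ s * Real.exp (-(b * x ^ β))) (Ioi 0) := by
  have hq : (-1:ℝ) < (s + 1) / β - 1 := by
    have : 0 < (s + 1) / β := div_pos (by linarith) hβ
    linarith
  have h := integrableOn_rpow_mul_exp_neg_mul_rpow hq zero_lt_one hb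
  rw [← integrableOn_Ioi_comp_rpow_iff' _ (ne_of_gt hβ)] at h
  refine h.congr_fun (fun x hx => ?_) measurableSet_Ioi
  have hx0 : (0:ℝ) < x := hx
  have e1 : (x ^ β) ^ ((s + 1) / β - 1) = x ^ (s + 1 - β) := by
    rw [← Real.rpow_mul hx0.le]
    congr 1
    field_simp
  dsimp only
  rw [smul_eq_mul, Real.rpow_one, e1, ← mul_assoc, ← Real.rpow_add hx0,
    show β - 1 + (s + 1 - β) = s by ring, neg_mul]

private lemma int_even {f : ℝ → ℝ} (hf : IntegrableOn (fun x => f |x|) (Ioi 0)) :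
    Integrable (fun x : ℝ => f |x|) := by
  have int_Iic : IntegrableOn (fun x ↦ f |x|) (Iic 0) := by
    rw [← Measure.map_neg_eq_self (volume : Measure ℝ)]
    have m : MeasurableEmbedding fun x : ℝ => -x := (Homeomorph.neg ℝ).measurableEmbedding
    rw [m.integrableOn_map_iff]
    simp_rw [Function.comp_def, abs_neg, neg_preimage, neg_Iic, neg_zero]
    exact Iff.mpr integrableOn_Ici_iff_integrableOn_Ioi hf
  rw [← integrableOn_univ, ← Iic_union_Ioi (a := (0:ℝ))]
  exact int_Iic.union hf

theorem stmt11 (p β ε r : ℝ) (hp : p ∈ Set.Ioo (0:ℝ) 1) (hβ : β ∈ Set.Ioo (0:ℝ) 2)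
    (hε : 0 < ε) (hr : r ∈ Set.Icc p 2)
    (a : ℝ) (ha : a = ∫ u : ℝ, (1 - Real.cos u) * |u| ^ (-1 - p)) :
    ∃ K : ℝ, ∀ ρ₁ ρ₂ : ℝ, ε ≤ ρ₁ → ε ≤ ρ₂ → ∀ x : ℝ,
      |(a⁻¹ * ∫ u : ℝ, (1 - Real.cos (u * x)) * Real.exp (-(ρ₁ ^ β * |u| ^ β)) * |u| ^ (-1 - p)) -
       (a⁻¹ * ∫ u : ℝ, (1 - Real.cos (u * x)) * Real.exp (-(ρ₂ ^ β * |u| ^ β)) * |u| ^ (-1 - p))|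
        ≤ K * |ρ₁ ^ β - ρ₂ ^ β| * |x| ^ r := by
  obtain ⟨hp0, hp1⟩ := hp
  obtain ⟨hβ0, hβ2⟩ := hβ
  obtain ⟨hrp, hr2⟩ := hr
  have hr0 : 0 < r := lt_of_lt_of_le hp0 hrp
  set c := ε ^ β with hc
  have hc0 : 0 < c := Real.rpow_pos_of_pos hε β
  -- generic integrability of the dominating functions
  have hint : ∀ t : ℝ, -1 < t →
      Integrable (fun u : ℝ => |u| ^ t * Real.exp (-(c * |u| ^ β))) := by
    intro t ht
    apply int_even (f := fun y : ℝ => y ^ t * Real.exp (-(c * y ^ β)))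
    refine (int_aux ht hβ0 hc0).congr_fun (fun x hx => ?_) measurableSet_Ioi
    rw [abs_of_pos hx]
  -- measurability
  have hmeas : ∀ ρ x : ℝ, AEStronglyMeasurable
      (fun u : ℝ => (1 - Real.cos (u * x)) * Real.exp (-(ρ ^ β * |u| ^ β)) * |u| ^ (-1 - p))
      volume := by
    intro ρ x
    apply Measurable.aestronglyMeasurable
    fun_prop
  -- integrability of each integrand
  have hfint : ∀ ρ : ℝ, ε ≤ ρ → ∀ x : ℝ, Integrable
      (fun u : ℝ => (1 - Real.cos (u * x)) * Real.exp (-(ρ ^ β * |u| ^ β)) * |u| ^ (-1 - p)) := by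
    intro ρ hρ x
    have hcρ : c ≤ ρ ^ β := Real.rpow_le_rpow hε.le hρ hβ0.le
    refine ((hint (1 - p) (by linarith)).const_mul (x ^ 2)).mono' (hmeas ρ x) ?_
    filter_upwards with u
    have h1 : 0 ≤ 1 - Real.cos (u * x) := by linarith [Real.cos_le_one (u * x)]
    have h2 : (0:ℝ) ≤ |u| ^ (-1 - p) := Real.rpow_nonneg (abs_nonneg u) _
    rw [Real.norm_eq_abs, abs_of_nonneg (mul_nonneg (mul_nonneg h1 (Real.exp_nonneg _)) h2)]
    have hE : Real.exp (-(ρ ^ β * |u| ^ β)) ≤ Real.exp (-(c * |u| ^ β)) :=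
      Real.exp_le_exp.2 (by nlinarith [Real.rpow_nonneg (abs_nonneg u) β])
    rcases eq_or_ne u 0 with rfl | hu
    · simp [Real.zero_rpow (by linarith : (1:ℝ) - p ≠ 0)]
    · have e : |u| ^ (2:ℝ) * |u| ^ (-1 - p) = |u| ^ (1 - p) := by
        rw [← Real.rpow_add (abs_pos.2 hu)]; congr 1; ring
      have h3 : 1 - Real.cos (u * x) ≤ u ^ 2 * x ^ 2 := by
        have := Real.one_sub_sq_div_two_le_cos (x := u * x)
        nlinarith [sq_nonneg (u * x)]
      have h4 : |u| ^ (2:ℝ) = u ^ 2 := by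
        rw [show (2:ℝ) = ((2:ℕ):ℝ) by norm_num, Real.rpow_natCast, sq_abs]
      have hEpos : (0:ℝ) ≤ Real.exp (-(ρ ^ β * |u| ^ β)) := Real.exp_nonneg _
      calc (1 - Real.cos (u * x)) * Real.exp (-(ρ ^ β * |u| ^ β)) * |u| ^ (-1 - p)
          ≤ (u ^ 2 * x ^ 2) * Real.exp (-(c * |u| ^ β)) * |u| ^ (-1 - p) := by
            apply mul_le_mul_of_nonneg_right _ h2
            exact mul_le_mul h3 hE hEpos (by positivity)
        _ = x ^ 2 * (|u| ^ (1 - p) * Real.exp (-(c * |u| ^ β))) := by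
            rw [← e, ← h4]; ring
  -- the key pointwise bound for the difference
  refine ⟨|a⁻¹| * (2 * ∫ u : ℝ, |u| ^ (r + β - 1 - p) * Real.exp (-(c * |u| ^ β))), ?_⟩
  intro ρ₁ ρ₂ hρ₁ hρ₂ x
  have hc1 : c ≤ ρ₁ ^ β := Real.rpow_le_rpow hε.le hρ₁ hβ0.le
  have hc2 : c ≤ ρ₂ ^ β := Real.rpow_le_rpow hε.le hρ₂ hβ0.le
  set D : ℝ := |ρ₁ ^ β - ρ₂ ^ β| * (2 * |x| ^ r) with hD
  have hbound : ∀ u : ℝ,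
      ‖((1 - Real.cos (u * x)) * Real.exp (-(ρ₁ ^ β * |u| ^ β)) * |u| ^ (-1 - p)) -
       ((1 - Real.cos (u * x)) * Real.exp (-(ρ₂ ^ β * |u| ^ β)) * |u| ^ (-1 - p))‖
      ≤ D * (|u| ^ (r + β - 1 - p) * Real.exp (-(c * |u| ^ β))) := by
    intro u
    have h1 : 0 ≤ 1 - Real.cos (u * x) := by linarith [Real.cos_le_one (u * x)]
    have h2 : (0:ℝ) ≤ |u| ^ (-1 - p) := Real.rpow_nonneg (abs_nonneg u) _
    have hub : (0:ℝ) ≤ |u| ^ β := Real.rpow_nonneg (abs_nonneg u) β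
    rcases eq_or_ne u 0 with rfl | hu
    · simp only [zero_mul, Real.cos_zero, sub_self, zero_mul, sub_zero, norm_zero]
      positivity
    have key : |Real.exp (-(ρ₁ ^ β * |u| ^ β)) - Real.exp (-(ρ₂ ^ β * |u| ^ β))| ≤
        |ρ₁ ^ β - ρ₂ ^ β| * |u| ^ β * Real.exp (-(c * |u| ^ β)) := by
      have := expdiff (a := ρ₁ ^ β * |u| ^ β) (b := ρ₂ ^ β * |u| ^ β) (m := c * |u| ^ β)
        (by nlinarith) (by nlinarith)
      calc |Real.exp (-(ρ₁ ^ β * |u| ^ β)) - Real.exp (-(ρ₂ ^ β * |u| ^ β))|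
          ≤ |ρ₁ ^ β * |u| ^ β - ρ₂ ^ β * |u| ^ β| * Real.exp (-(c * |u| ^ β)) := this
        _ = |ρ₁ ^ β - ρ₂ ^ β| * |u| ^ β * Real.exp (-(c * |u| ^ β)) := by
            rw [← sub_mul, abs_mul, abs_of_nonneg hub]
    have hcos : 1 - Real.cos (u * x) ≤ 2 * (|u| ^ r * |x| ^ r) := by
      have := cosbound hr0 hr2 (u * x)
      rwa [abs_mul, Real.mul_rpow (abs_nonneg u) (abs_nonneg x)] at this
    have e : |u| ^ r * |u| ^ β * |u| ^ (-1 - p) = |u| ^ (r + β - 1 - p) := by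
      rw [← Real.rpow_add (abs_pos.2 hu), ← Real.rpow_add (abs_pos.2 hu)]
      congr 1; ring
    have expand : ((1 - Real.cos (u * x)) * Real.exp (-(ρ₁ ^ β * |u| ^ β)) * |u| ^ (-1 - p)) -
        ((1 - Real.cos (u * x)) * Real.exp (-(ρ₂ ^ β * |u| ^ β)) * |u| ^ (-1 - p)) =
        (1 - Real.cos (u * x)) *
          (Real.exp (-(ρ₁ ^ β * |u| ^ β)) - Real.exp (-(ρ₂ ^ β * |u| ^ β))) *
          |u| ^ (-1 - p) := by ring
    rw [Real.norm_eq_abs, expand, abs_mul, abs_mul, abs_of_nonneg h1, abs_of_nonneg h2]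
    calc (1 - Real.cos (u * x)) *
          |Real.exp (-(ρ₁ ^ β * |u| ^ β)) - Real.exp (-(ρ₂ ^ β * |u| ^ β))| * |u| ^ (-1 - p)
        ≤ (2 * (|u| ^ r * |x| ^ r)) *
          (|ρ₁ ^ β - ρ₂ ^ β| * |u| ^ β * Real.exp (-(c * |u| ^ β))) * |u| ^ (-1 - p) := by
          apply mul_le_mul_of_nonneg_right _ h2
          exact mul_le_mul hcos key (abs_nonneg _) (by positivity)
      _ = D * (|u| ^ (r + β - 1 - p) * Real.exp (-(c * |u| ^ β))) := by
          rw [hD, ← e]; ring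
  have hgint : Integrable (fun u : ℝ =>
      D * (|u| ^ (r + β - 1 - p) * Real.exp (-(c * |u| ^ β)))) :=
    (hint (r + β - 1 - p) (by linarith)).const_mul D
  have hsub : (∫ u : ℝ, (1 - Real.cos (u * x)) * Real.exp (-(ρ₁ ^ β * |u| ^ β)) * |u| ^ (-1 - p)) -
      (∫ u : ℝ, (1 - Real.cos (u * x)) * Real.exp (-(ρ₂ ^ β * |u| ^ β)) * |u| ^ (-1 - p)) =
      ∫ u : ℝ, ((1 - Real.cos (u * x)) * Real.exp (-(ρ₁ ^ β * |u| ^ β)) * |u| ^ (-1 - p)) -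
        ((1 - Real.cos (u * x)) * Real.exp (-(ρ₂ ^ β * |u| ^ β)) * |u| ^ (-1 - p)) :=
    (integral_sub (hfint ρ₁ hρ₁ x) (hfint ρ₂ hρ₂ x)).symm
  have hmain : |(∫ u : ℝ, (1 - Real.cos (u * x)) * Real.exp (-(ρ₁ ^ β * |u| ^ β)) * |u| ^ (-1 - p)) -
      (∫ u : ℝ, (1 - Real.cos (u * x)) * Real.exp (-(ρ₂ ^ β * |u| ^ β)) * |u| ^ (-1 - p))| ≤
      D * ∫ u : ℝ, |u| ^ (r + β - 1 - p) * Real.exp (-(c * |u| ^ β)) := by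
    rw [hsub, ← Real.norm_eq_abs, ← integral_const_mul]
    exact norm_integral_le_of_norm_le hgint (ae_of_all _ hbound)
  rw [← mul_sub, abs_mul]
  calc |a⁻¹| * |(∫ u : ℝ, (1 - Real.cos (u * x)) * Real.exp (-(ρ₁ ^ β * |u| ^ β)) * |u| ^ (-1 - p)) -
      (∫ u : ℝ, (1 - Real.cos (u * x)) * Real.exp (-(ρ₂ ^ β * |u| ^ β)) * |u| ^ (-1 - p))|
      ≤ |a⁻¹| * (D * ∫ u : ℝ, |u| ^ (r + β - 1 - p) * Real.exp (-(c * |u| ^ β))) :=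
        mul_le_mul_of_nonneg_left hmain (abs_nonneg _)
    _ = |a⁻¹| * (2 * ∫ u : ℝ, |u| ^ (r + β - 1 - p) * Real.exp (-(c * |u| ^ β))) *
        |ρ₁ ^ β - ρ₂ ^ β| * |x| ^ r := by rw [hD]; ring
end

section
/- Let p ∈ (0,1) and let a ∈ ℝ, z > 0. Then ∫_0^z (1 ∧ |a+u|^{p-1}) du ≤ K (z 1_{{z ≤ 1}} + z^p 1_{{z > 1}}) where the constant K depends only on p (and not on a). -/
open MeasureTheory Set intervalIntegral

private lemma my_rpow_subadd {x y p : ℝ} (hx : 0 ≤ x) (hy : 0 ≤ y)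
    (hp0 : 0 ≤ p) (hp1 : p ≤ 1) : (x + y) ^ p ≤ x ^ p + y ^ p := by
  have h := NNReal.rpow_add_le_add_rpow x.toNNReal y.toNNReal hp0 hp1
  have h2 := NNReal.coe_le_coe.2 h
  simpa [NNReal.coe_rpow, Real.coe_toNNReal x hx, Real.coe_toNNReal y hy,
    Real.coe_toNNReal _ (add_nonneg hx hy), Real.toNNReal_add hx hy] using h2

private lemma my_intInt (p a s t : ℝ) :
    IntervalIntegrable (fun u => min 1 (|a + u| ^ (p - 1))) volume s t := by
  rw [intervalIntegrable_iff]
  apply MeasureTheory.Integrable.mono' (g := fun _ => (1 : ℝ))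
  · exact integrableOn_const measure_Ioc_lt_top.ne
  · exact (measurable_const.min
      (((measurable_const.add measurable_id).abs).pow measurable_const)).aestronglyMeasurable
  · filter_upwards with x
    rw [Real.norm_eq_abs,
      abs_of_nonneg (le_min zero_le_one (Real.rpow_nonneg (abs_nonneg _) _))]
    exact min_le_left _ _

theorem stmt12 (p : ℝ) (hp : p ∈ Set.Ioo (0:ℝ) 1) :
    ∃ K : ℝ, ∀ a z : ℝ, 0 < z →
      (∫ u in Set.Ioo (0:ℝ) z, min 1 (|a + u| ^ (p - 1))) ≤
        K * (if z ≤ 1 then z else z ^ p) := by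
  obtain ⟨hp0, hp1⟩ := hp
  refine ⟨2 + 2 / p, fun a z hz => ?_⟩
  set f : ℝ → ℝ := fun u => min 1 (|a + u| ^ (p - 1)) with hf
  have hIoo : (∫ u in Set.Ioo (0:ℝ) z, f u) = ∫ u in (0:ℝ)..z, f u := by
    rw [intervalIntegral.integral_of_le hz.le, MeasureTheory.integral_Ioc_eq_integral_Ioo]
  have hfle1 : ∀ x, f x ≤ 1 := fun x => min_le_left _ _
  by_cases hz1 : z ≤ 1
  · rw [if_pos hz1, hIoo]
    have h1 : (∫ u in (0:ℝ)..z, f u) ≤ ∫ _u in (0:ℝ)..z, (1:ℝ) :=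
      intervalIntegral.integral_mono_on hz.le (my_intInt p a 0 z)
        intervalIntegrable_const (fun x _ => hfle1 x)
    have h2 : (∫ _u in (0:ℝ)..z, (1:ℝ)) = z := by simp
    have hK : (1:ℝ) ≤ 2 + 2 / p := by
      have : 0 ≤ 2 / p := div_nonneg (by norm_num) hp0.le
      linarith
    calc (∫ u in (0:ℝ)..z, f u) ≤ z := h1.trans_eq h2
      _ ≤ (2 + 2 / p) * z := by nlinarith
  · push_neg at hz1
    rw [if_neg (not_le.2 hz1), hIoo]
    set b : ℝ := max 0 (min z (-1 - a)) with hbdef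
    set c : ℝ := max 0 (min z (1 - a)) with hcdef
    have hb0 : 0 ≤ b := le_max_left _ _
    have hbz : b ≤ z := max_le hz.le (min_le_left _ _)
    have hcz : c ≤ z := max_le hz.le (min_le_left _ _)
    have hbc : b ≤ c := max_le_max le_rfl (min_le_min le_rfl (by linarith))
    have hc2 : c ≤ b + 2 := by
      have h1 : min z (1 - a) ≤ min z (-1 - a) + 2 := by
        rcases le_total z (-1 - a) with h | h
        · rw [min_eq_left h]; linarith [min_le_left z (1 - a)]
        · rw [min_eq_right h]; linarith [min_le_right z (1 - a)]
      exact max_le (by linarith) (h1.trans (by linarith [le_max_right (0:ℝ) (min z (-1 - a))]))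
    have hzp1 : (1:ℝ) ≤ z ^ p := by
      have := Real.rpow_le_rpow zero_le_one hz1.le hp0.le
      simpa using this
    have hzp0 : 0 < z ^ p := lt_of_lt_of_le one_pos hzp1
    -- term 1 : ∫ 0..b
    have hterm1 : (∫ u in (0:ℝ)..b, f u) ≤ z ^ p / p := by
      rcases eq_or_lt_of_le hb0 with h | h
      · rw [← h, intervalIntegral.integral_same]; positivity
      · have hm : 0 < min z (-1 - a) := by
          rcases le_or_gt (min z (-1 - a)) 0 with h' | h'
          · rw [hbdef, max_eq_left h'] at h; exact absurd h (lt_irrefl _)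
          · exact h'
        have hbm : b = min z (-1 - a) := max_eq_right hm.le
        have hba : b ≤ -1 - a := hbm ▸ min_le_right _ _
        have hcont : ContinuousOn (fun x : ℝ => (-a - x) ^ (p - 1)) (Set.uIcc 0 b) := by
          apply ContinuousOn.rpow_const (by fun_prop)
          intro x hx
          rw [Set.uIcc_of_le hb0] at hx
          left; have : x ≤ b := hx.2; nlinarith [hx.1]
        have hmono : (∫ u in (0:ℝ)..b, f u) ≤ ∫ u in (0:ℝ)..b, (-a - u) ^ (p - 1) := by
          apply intervalIntegral.integral_mono_on hb0 (my_intInt p a 0 b)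
            hcont.intervalIntegrable
          intro x hx
          have hax : a + x ≤ -1 := by linarith [hx.2, hx.1]
          have : |a + x| = -a - x := by rw [abs_of_nonpos (by linarith)]; ring
          rw [this]; exact min_le_right _ _

        have hcomp : (∫ u in (0:ℝ)..b, (-a - u) ^ (p - 1))
            = ∫ x in (-a - b)..(-a - 0), x ^ (p - 1) := by
          exact intervalIntegral.integral_comp_sub_left (fun x => x ^ (p - 1)) (-a)
        have hval : (∫ x in (-a - b)..(-a - 0), x ^ (p - 1))
            = ((-a - 0) ^ p - (-a - b) ^ p) / p := by
          rw [integral_rpow (Or.inl (by linarith))]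
          norm_num
        have hsub : (-a - 0) ^ p - (-a - b) ^ p ≤ b ^ p := by
          have hs : 0 ≤ -a - b := by linarith
          have := my_rpow_subadd hs hb0 hp0.le hp1.le
          have heq : (-a - b) + b = -a - 0 := by ring
          rw [heq] at this; linarith
        have hbp : b ^ p ≤ z ^ p := Real.rpow_le_rpow hb0 hbz hp0.le
        rw [hcomp, hval] at hmono
        calc (∫ u in (0:ℝ)..b, f u) ≤ ((-a - 0) ^ p - (-a - b) ^ p) / p := hmono
          _ ≤ z ^ p / p := (div_le_div_iff_of_pos_right hp0).2 (by linarith)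
    -- term 2 : ∫ b..c
    have hterm2 : (∫ u in b..c, f u) ≤ 2 * z ^ p := by
      have h1 : (∫ u in b..c, f u) ≤ ∫ _u in b..c, (1:ℝ) :=
        intervalIntegral.integral_mono_on hbc (my_intInt p a b c)
          intervalIntegrable_const (fun x _ => hfle1 x)
      have h2 : (∫ _u in b..c, (1:ℝ)) = c - b := by simp
      rw [h2] at h1
      nlinarith
    -- term 3 : ∫ c..z
    have hterm3 : (∫ u in c..z, f u) ≤ z ^ p / p := by
      rcases eq_or_lt_of_le hcz with h | h
      · rw [h, intervalIntegral.integral_same]; positivity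
      · have hca : 1 - a ≤ c := by
          rcases le_total z (1 - a) with h' | h'
          · exfalso
            rw [hcdef, min_eq_left h', max_eq_right hz.le] at h
            exact absurd h (lt_irrefl _)
          · rw [hcdef, min_eq_right h']; exact le_max_right _ _
        have hcont : ContinuousOn (fun x : ℝ => (a + x) ^ (p - 1)) (Set.uIcc c z) := by
          apply ContinuousOn.rpow_const (by fun_prop)
          intro x hx
          rw [Set.uIcc_of_le hcz] at hx
          left; nlinarith [hx.1]
        have hmono : (∫ u in c..z, f u) ≤ ∫ u in c..z, (a + u) ^ (p - 1) := by
          apply intervalIntegral.integral_mono_on hcz (my_intInt p a c z)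
            hcont.intervalIntegrable
          intro x hx
          have hax : 1 ≤ a + x := by linarith [hx.1]
          have : |a + x| = a + x := abs_of_nonneg (by linarith)
          rw [this]; exact min_le_right _ _

        have hcomp : (∫ u in c..z, (a + u) ^ (p - 1))
            = ∫ x in (a + c)..(a + z), x ^ (p - 1) :=
          intervalIntegral.integral_comp_add_left (fun x => x ^ (p - 1)) a
        have hval : (∫ x in (a + c)..(a + z), x ^ (p - 1))
            = ((a + z) ^ p - (a + c) ^ p) / p := by
          rw [integral_rpow (Or.inl (by linarith))]
          norm_num
        have hsub : (a + z) ^ p - (a + c) ^ p ≤ (z - c) ^ p := by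
          have hs : 0 ≤ a + c := by linarith
          have := my_rpow_subadd hs (by linarith : (0:ℝ) ≤ z - c) hp0.le hp1.le
          have heq : (a + c) + (z - c) = a + z := by ring
          rw [heq] at this; linarith
        have hzc : (z - c) ^ p ≤ z ^ p :=
          Real.rpow_le_rpow (by linarith) (by linarith [le_max_left (0:ℝ) (min z (1 - a))]) hp0.le
        rw [hcomp, hval] at hmono
        calc (∫ u in c..z, f u) ≤ ((a + z) ^ p - (a + c) ^ p) / p := hmono
          _ ≤ z ^ p / p := (div_le_div_iff_of_pos_right hp0).2 (by linarith)
    -- combine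
    have hsplit : (∫ u in (0:ℝ)..z, f u)
        = (∫ u in (0:ℝ)..b, f u) + (∫ u in b..c, f u) + (∫ u in c..z, f u) := by
      rw [intervalIntegral.integral_add_adjacent_intervals (my_intInt p a 0 b) (my_intInt p a b c),
        intervalIntegral.integral_add_adjacent_intervals (my_intInt p a 0 c) (my_intInt p a c z)]
    rw [hsplit]
    have : z ^ p / p + 2 * z ^ p + z ^ p / p = (2 + 2 / p) * z ^ p := by field_simp; ring
    linarith
end
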